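/- arXiv:1006.4888 — 11 statements merged into one kernel-verified Lean document; each statement's English description precedes it below -/
import Mathlib

section
/- Let D, M, J be positive integers. For m ∈ {1,…,M} let U_m and V_m be D×D complex unitary matrices, and for j ∈ {1,…,J} let ψ_j and φ_j be D×D complex matrices with each ψ_j invertible. Assume that for every m and every j there exists a complex number c with |c| = 1 such that U_m · ψ_j · V_mᵀ = c · φ_j. Then for all m, n ∈ {1,…,M} and all j, k ∈ {1,…,J} there exists a complex number z with |z| = 1 such that (U_m† U_n) · (ψ_j ψ_k†) = z · (ψ_j ψ_k†) · (U_m† U_n). -/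
open Matrix

lemma key_conj (D : ℕ) (Um Vm ψj ψk φj φk : Matrix (Fin D) (Fin D) ℂ)
    (hVm : Vmᵀ * (Vmᵀ)ᴴ = 1) (e f : ℂ)
    (h1 : Um * ψj * Vmᵀ = e • φj) (h2 : Um * ψk * Vmᵀ = f • φk) :
    Um * (ψj * ψkᴴ) * Umᴴ = (e * star f) • (φj * φkᴴ) := by
  have key : (Um * ψj * Vmᵀ) * (Um * ψk * Vmᵀ)ᴴ = Um * (ψj * ψkᴴ) * Umᴴ := by
    simp only [conjTranspose_mul, ← mul_assoc]
    rw [mul_assoc (Um * ψj) Vmᵀ (Vmᵀ)ᴴ, hVm, mul_one]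
  rw [h1, h2] at key
  rw [← key, conjTranspose_smul, smul_mul_assoc, mul_smul_comm, smul_smul]

/-- If unitary products `U_m ⊗ V_m` map each full-Schmidt-rank state `ψ_j` to `φ_j`
up to a phase, then `U_m† U_n` commutes with `ψ_j ψ_k†` up to a phase. -/
theorem random_unitary_commute_up_to_phase (D M J : ℕ) (hD : 0 < D) (hM : 0 < M) (hJ : 0 < J)
    (U V : Fin M → Matrix (Fin D) (Fin D) ℂ)
    (hU : ∀ m, (U m)ᴴ * U m = 1) (hV : ∀ m, (V m)ᴴ * V m = 1)
    (ψ φ : Fin J → Matrix (Fin D) (Fin D) ℂ)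
    (hψ : ∀ j, IsUnit (ψ j))
    (hmap : ∀ m j, ∃ c : ℂ, ‖c‖ = 1 ∧ U m * ψ j * (V m)ᵀ = c • φ j) :
    ∀ m n : Fin M, ∀ j k : Fin J, ∃ z : ℂ, ‖z‖ = 1 ∧
      ((U m)ᴴ * U n) * (ψ j * (ψ k)ᴴ) = z • ((ψ j * (ψ k)ᴴ) * ((U m)ᴴ * U n)) := by
  intro m n j k
  obtain ⟨a, ha, hma⟩ := hmap m j
  obtain ⟨b, hb, hmb⟩ := hmap m k
  obtain ⟨c, hc, hmc⟩ := hmap n j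
  obtain ⟨d, hd, hmd⟩ := hmap n k
  have hVt : ∀ p, (V p)ᵀ * ((V p)ᵀ)ᴴ = 1 := by
    intro p
    have h : ((V p)ᵀ)ᴴ = ((V p)ᴴ)ᵀ := by
      ext i l; simp [conjTranspose_apply]
    rw [h, ← transpose_mul, hV p, transpose_one]
  set A := ψ j * (ψ k)ᴴ with hA
  set B := φ j * (φ k)ᴴ with hB
  have Em : U m * A * (U m)ᴴ = (a * star b) • B :=
    key_conj D (U m) (V m) (ψ j) (ψ k) (φ j) (φ k) (hVt m) a b hma hmb
  have En : U n * A * (U n)ᴴ = (c * star d) • B :=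
    key_conj D (U n) (V n) (ψ j) (ψ k) (φ j) (φ k) (hVt n) c d hmc hmd
  have hab : a * star b ≠ 0 := by
    simp only [ne_eq, mul_eq_zero, star_eq_zero, not_or]
    constructor <;> intro h <;> simp [h] at ha hb
  set w : ℂ := (c * star d) * (a * star b)⁻¹ with hw
  have hBeq : B = (a * star b)⁻¹ • (U m * A * (U m)ᴴ) := by
    rw [Em, smul_smul, inv_mul_cancel₀ hab, one_smul]
  rw [hBeq, smul_smul, ← hw] at En
  refine ⟨w, ?_, ?_⟩
  · rw [hw, ← div_eq_mul_inv]
    simp [map_div₀, ha, hb, hc, hd]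
  · have step := congrArg (fun X => (U m)ᴴ * (X * U n)) En
    simp only [smul_mul_assoc, mul_smul_comm] at step
    have L : (U m)ᴴ * (U n * A * (U n)ᴴ * U n) = (U m)ᴴ * U n * A := by
      rw [mul_assoc (U n * A), hU n, mul_one, ← mul_assoc]
    have R : (U m)ᴴ * (U m * A * (U m)ᴴ * U n) = A * ((U m)ᴴ * U n) := by
      rw [← mul_assoc, ← mul_assoc, ← mul_assoc, hU m, one_mul, mul_assoc]
    rw [L, R] at step
    exact step
end

section
/- Let D and N be positive integers, let λ : {0,…,D−1} → ℝ be nondecreasing with λ_0 ≥ 0, and let ψ be the D×D diagonal complex matrix with diagonal entries √λ_0, √λ_1, …, √λ_{D−1}. Let A_k, B_k (1 ≤ k ≤ N) be arbitrary D×D complex matrices, and let r be a real number such that r·I − ∑_k (A_k†A_k) ⊗ (B_k†B_k) is positive semidefinite. Then for every integer n with 0 ≤ n ≤ D, ∑_{k=1}^N χ_n((A_k ψ B_kᵀ)(A_k ψ B_kᵀ)†) ≤ r · ∑_{j=0}^{n−1} λ_j. -/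
open Matrix Kronecker ComplexOrder

/-- `chi hM n` is the sum of the `n` smallest eigenvalues of the Hermitian matrix `M`,
i.e. the minimum over all `n`-element subsets `s` of the index set of the sum of the
eigenvalues of `M` over `s`. -/
noncomputable def chi {D : ℕ} {M : Matrix (Fin D) (Fin D) ℂ} (hM : M.IsHermitian)
    (n : ℕ) : ℝ :=
  sInf {x : ℝ | ∃ s : Finset (Fin D), s.card = n ∧ x = ∑ i ∈ s, hM.eigenvalues i}

open Finset

local notation "⟪" x ", " y "⟫" => @inner ℂ _ _ x y

lemma card_filter_lt_fin (D n : ℕ) (hn : n ≤ D) :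
    (Finset.univ.filter fun i : Fin D => (i : ℕ) < n).card = n := by
  have : (Finset.univ.filter fun i : Fin D => (i : ℕ) < n) =
      (Finset.univ : Finset (Fin n)).map (Fin.castLEEmb hn) := by
    ext i
    simp only [mem_filter, mem_univ, true_and, Finset.mem_map]
    constructor
    · intro h; exact ⟨⟨i, h⟩, by simp [Fin.castLEEmb, Fin.castLE]⟩
    · rintro ⟨j, -, rfl⟩; simpa using j.isLt
  rw [this, Finset.card_map, Finset.card_univ, Fintype.card_fin]

lemma exists_subset_card_sum_le {D : ℕ} (eig t : Fin D → ℝ)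
    (ht0 : ∀ j, 0 ≤ t j) (ht1 : ∀ j, t j ≤ 1) {n : ℕ} (hn : n ≤ D)
    (hts : ∑ j, t j = n) :
    ∃ s : Finset (Fin D), s.card = n ∧ ∑ i ∈ s, eig i ≤ ∑ j, eig j * t j := by
  rcases Nat.eq_zero_or_pos n with rfl | hpos
  · refine ⟨∅, rfl, ?_⟩
    have : ∀ j ∈ Finset.univ, t j = 0 := by
      rw [← Finset.sum_eq_zero_iff_of_nonneg (fun j _ => ht0 j)]
      simpa using hts
    simp only [Finset.sum_empty]
    rw [Finset.sum_congr rfl (fun j hj => by rw [this j hj, mul_zero])]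
    simp
  · set σ := Tuple.sort eig with hσ
    have hmono := Tuple.monotone_sort eig
    set s : Finset (Fin D) :=
      (Finset.univ.filter fun i : Fin D => (i : ℕ) < n).image σ with hs
    have hcard : s.card = n := by
      rw [hs, Finset.card_image_of_injective _ σ.injective, card_filter_lt_fin D n hn]
    have hnD : n - 1 < D := lt_of_lt_of_le (Nat.pred_lt hpos.ne') hn
    set μ : ℝ := eig (σ ⟨n - 1, hnD⟩) with hμ
    have h_in : ∀ j ∈ s, eig j ≤ μ := by
      intro j hj
      rw [hs, Finset.mem_image] at hj
      obtain ⟨i, hi, rfl⟩ := hj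
      rw [Finset.mem_filter] at hi
      exact hmono (show i ≤ ⟨n-1, hnD⟩ from Fin.mk_le_of_le_val (Nat.le_pred_of_lt hi.2))
    have h_out : ∀ j ∉ s, μ ≤ eig j := by
      intro j hj
      have : ¬ ((σ.symm j : ℕ) < n) := by
        intro h
        exact hj (by rw [hs, Finset.mem_image]; exact ⟨σ.symm j, by simpa using h, by simp⟩)
      have : (⟨n-1, hnD⟩ : Fin D) ≤ σ.symm j :=
        Fin.mk_le_of_le_val (le_trans (Nat.pred_le _) (not_lt.mp this))
      have := hmono this
      exact this.trans_eq (congrArg eig (σ.apply_symm_apply j))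
    set ind : Fin D → ℝ := fun j => if j ∈ s then 1 else 0 with hind
    have hindsum : ∑ j, ind j = n := by
      rw [hind]; simp [Finset.sum_ite_mem, hcard]
    have hsind : ∑ i ∈ s, eig i = ∑ j, eig j * ind j := by
      rw [hind]; simp [mul_ite, Finset.sum_ite_mem]
    have key : 0 ≤ ∑ j, (eig j - μ) * (t j - ind j) := by
      apply Finset.sum_nonneg
      intro j _
      by_cases hjs : j ∈ s
      · have h1 : eig j - μ ≤ 0 := by linarith [h_in j hjs]
        have h2 : t j - ind j ≤ 0 := by simp [hind, hjs]; linarith [ht1 j]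
        nlinarith
      · have h1 : 0 ≤ eig j - μ := by linarith [h_out j hjs]
        have h2 : 0 ≤ t j - ind j := by simp [hind, hjs]; linarith [ht0 j]
        exact mul_nonneg h1 h2
    have expand : ∑ j, (eig j - μ) * (t j - ind j)
        = ∑ j, eig j * t j - ∑ j, eig j * ind j - μ * ∑ j, t j + μ * ∑ j, ind j := by
      rw [Finset.mul_sum, Finset.mul_sum]
      rw [← Finset.sum_sub_distrib, ← Finset.sum_sub_distrib, ← Finset.sum_add_distrib]
      exact Finset.sum_congr rfl fun j _ => by ring
    refine ⟨s, hcard, ?_⟩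
    rw [hsind]
    rw [expand, hts, hindsum] at key
    linarith

lemma quadform_eq_sum_eigen {D : ℕ} {M : Matrix (Fin D) (Fin D) ℂ} (hM : M.IsHermitian)
    (x : EuclideanSpace ℂ (Fin D)) :
    (star (WithLp.equiv 2 _ x) ⬝ᵥ M *ᵥ (WithLp.equiv 2 _ x)).re
      = ∑ j, hM.eigenvalues j * ‖⟪hM.eigenvectorBasis j, x⟫‖^2 := by
  have h0 : (star (WithLp.equiv 2 _ x) ⬝ᵥ M *ᵥ (WithLp.equiv 2 _ x))
      = ⟪x, Matrix.toEuclideanLin M x⟫ := (dotProduct_comm _ _).trans rfl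
  have hsym := (Matrix.isHermitian_iff_isSymmetric.mp hM)
  have hb : ∀ j, Matrix.toEuclideanLin M (hM.eigenvectorBasis j)
      = (hM.eigenvalues j : ℂ) • hM.eigenvectorBasis j := by
    intro j
    apply (WithLp.equiv 2 _).injective
    change M *ᵥ (hM.eigenvectorBasis j).ofLp = _
    have := hM.mulVec_eigenvectorBasis j
    convert this using 1
    ext i; simp [Complex.real_smul]
  have key := (hM.eigenvectorBasis.sum_inner_mul_inner x (Matrix.toEuclideanLin M x)).symm
  rw [h0, key]
  rw [Complex.re_sum]
  refine Finset.sum_congr rfl fun j _ => ?_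
  have h1 : ⟪hM.eigenvectorBasis j, Matrix.toEuclideanLin M x⟫
      = (hM.eigenvalues j : ℂ) * ⟪hM.eigenvectorBasis j, x⟫ := by
    rw [← hsym, hb, inner_smul_left]
    simp
  rw [h1]
  have h2 : ⟪x, hM.eigenvectorBasis j⟫ = (starRingEnd ℂ) ⟪hM.eigenvectorBasis j, x⟫ :=
    (inner_conj_symm _ _).symm
  rw [h2]
  set z := ⟪hM.eigenvectorBasis j, x⟫
  have : (starRingEnd ℂ) z * ((hM.eigenvalues j : ℂ) * z)
      = (hM.eigenvalues j : ℂ) * ((starRingEnd ℂ) z * z) := by ring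
  rw [this, Complex.conj_mul']
  rw [← Complex.ofReal_pow, ← Complex.ofReal_mul, Complex.ofReal_re]

lemma chi_le_sum_quadform {D : ℕ} {M : Matrix (Fin D) (Fin D) ℂ} (hM : M.IsHermitian)
    {n : ℕ} (hn : n ≤ D) (u : Fin n → EuclideanSpace ℂ (Fin D))
    (hu : Orthonormal ℂ u) :
    chi hM n ≤ ∑ i, (star (WithLp.equiv 2 _ (u i)) ⬝ᵥ M *ᵥ (WithLp.equiv 2 _ (u i))).re := by
  classical
  set b := hM.eigenvectorBasis with hbdef
  set c : Fin n → Fin D → ℂ := fun i j => ⟪b j, u i⟫ with hc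
  set t : Fin D → ℝ := fun j => ∑ i, ‖c i j‖^2 with ht
  have ht0 : ∀ j, 0 ≤ t j := fun j => Finset.sum_nonneg fun i _ => by positivity
  have parseval : ∀ (x : EuclideanSpace ℂ (Fin D)), ∑ j, ‖⟪b j, x⟫‖^2 = ‖x‖^2 := by
    intro x
    have key := b.sum_inner_mul_inner x x
    have hterm : ∀ j, ⟪x, b j⟫ * ⟪b j, x⟫ = ((‖⟪b j, x⟫‖^2 : ℝ) : ℂ) := by
      intro j
      calc ⟪x, b j⟫ * ⟪b j, x⟫ = (starRingEnd ℂ) ⟪b j, x⟫ * ⟪b j, x⟫ := by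
            rw [inner_conj_symm]
        _ = ((‖⟪b j, x⟫‖^2 : ℝ) : ℂ) := by
            rw [Complex.conj_mul', ← Complex.ofReal_pow]
    rw [Finset.sum_congr rfl fun j _ => hterm j] at key
    have hre := congrArg Complex.re key
    rw [Complex.re_sum] at hre
    rw [Finset.sum_congr rfl fun j (_ : j ∈ Finset.univ) =>
      (Complex.ofReal_re (‖⟪b j, x⟫‖^2))] at hre
    rw [hre]
    exact inner_self_eq_norm_sq (𝕜 := ℂ) x
  have ht1 : ∀ j, t j ≤ 1 := by
    intro j
    have bessel := hu.sum_inner_products_le (𝕜 := ℂ) (s := Finset.univ) (b j)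
    have hbj : ‖b j‖ = 1 := b.orthonormal.1 j
    calc t j = ∑ i, ‖⟪u i, b j⟫‖^2 := by
          refine Finset.sum_congr rfl fun i _ => ?_
          rw [hc]; rw [← norm_inner_symm]
      _ ≤ ‖b j‖^2 := bessel
      _ = 1 := by rw [hbj]; norm_num
  have hts : ∑ j, t j = n := by
    rw [ht]
    rw [Finset.sum_comm]
    have : ∀ i, ∑ j, ‖c i j‖^2 = 1 := by
      intro i
      rw [hc]
      simp only
      rw [parseval (u i), hu.1 i]; norm_num
    rw [Finset.sum_congr rfl fun i _ => this i]
    simp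
  obtain ⟨s, hcard, hle⟩ := exists_subset_card_sum_le hM.eigenvalues t ht0 ht1 hn hts
  have hmem : (∑ i ∈ s, hM.eigenvalues i) ∈
      {x : ℝ | ∃ s : Finset (Fin D), s.card = n ∧ x = ∑ i ∈ s, hM.eigenvalues i} :=
    ⟨s, hcard, rfl⟩
  have hbdd : BddBelow {x : ℝ | ∃ s : Finset (Fin D), s.card = n ∧ x = ∑ i ∈ s, hM.eigenvalues i} := by
    have hsub : {x : ℝ | ∃ s : Finset (Fin D), s.card = n ∧ x = ∑ i ∈ s, hM.eigenvalues i}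
        ⊆ Set.range (fun s : Finset (Fin D) => ∑ i ∈ s, hM.eigenvalues i) := by
      rintro x ⟨s, -, rfl⟩; exact ⟨s, rfl⟩
    exact (Set.finite_range _).bddBelow.mono hsub
  refine le_trans (csInf_le hbdd hmem) (le_trans hle ?_)
  have : ∀ i, (star (WithLp.equiv 2 _ (u i)) ⬝ᵥ M *ᵥ (WithLp.equiv 2 _ (u i))).re
      = ∑ j, hM.eigenvalues j * ‖c i j‖^2 := fun i => quadform_eq_sum_eigen hM (u i)
  rw [Finset.sum_congr rfl fun i _ => this i, Finset.sum_comm]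
  refine le_of_eq (Finset.sum_congr rfl fun j _ => ?_)
  rw [ht, Finset.mul_sum]

lemma exists_orthonormal_killing {D n : ℕ} (hn : n ≤ D)
    (g : Fin D → EuclideanSpace ℂ (Fin D)) :
    ∃ u : Fin n → EuclideanSpace ℂ (Fin D), Orthonormal ℂ u ∧
      ∀ (i : Fin n) (a : Fin D), n ≤ (a : ℕ) → ⟪g a, u i⟫ = 0 := by
  classical
  set W : Submodule ℂ (EuclideanSpace ℂ (Fin D)) :=
    Submodule.span ℂ (Set.range fun a : {a : Fin D // n ≤ (a : ℕ)} => g a.val) with hW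
  have hcardsub : Fintype.card {a : Fin D // n ≤ (a : ℕ)} = D - n := by
    rw [Fintype.card_subtype]
    have h1 : (Finset.univ.filter fun a : Fin D => n ≤ (a : ℕ))
        = Finset.univ \ (Finset.univ.filter fun a : Fin D => (a : ℕ) < n) := by
      rw [← Finset.filter_not]
      exact Finset.filter_congr fun a _ => by simp [not_lt]
    rw [h1, Finset.card_sdiff_of_subset (Finset.filter_subset _ _), card_filter_lt_fin D n hn]
    simp
  have hrkW : Module.finrank ℂ W ≤ D - n := by
    refine le_trans (finrank_range_le_card _) (le_of_eq hcardsub)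
  have hdim : Module.finrank ℂ W + Module.finrank ℂ Wᗮ
      = Module.finrank ℂ (EuclideanSpace ℂ (Fin D)) :=
    Submodule.finrank_add_finrank_orthogonal W
  rw [finrank_euclideanSpace_fin] at hdim
  have hge : n ≤ Module.finrank ℂ ↥Wᗮ := by omega
  set b := stdOrthonormalBasis ℂ ↥Wᗮ with hb
  refine ⟨fun i => (b (Fin.castLE hge i) : EuclideanSpace ℂ (Fin D)), ?_, ?_⟩
  · have h1 : Orthonormal ℂ (fun j => (Wᗮ.subtypeₗᵢ) (b j)) :=
      b.orthonormal.comp_linearIsometry _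
    exact h1.comp _ (Fin.castLE_injective hge)
  · intro i a ha
    have hu : ((b (Fin.castLE hge i) : EuclideanSpace ℂ (Fin D))) ∈ Wᗮ :=
      (b (Fin.castLE hge i)).2
    have hgW : g a ∈ W := Submodule.subset_span ⟨⟨a, ha⟩, rfl⟩
    exact (Submodule.mem_orthogonal _ _).mp hu _ hgW

lemma star_dot_self_re {m : Type*} [Fintype m] (z : m → ℂ) :
    (star z ⬝ᵥ z).re = ∑ i, ‖z i‖^2 := by
  have h : star z ⬝ᵥ z = ∑ i, ((‖z i‖^2 : ℝ) : ℂ) := by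
    refine Finset.sum_congr rfl fun i _ => ?_
    simp only [Pi.star_apply, Complex.star_def]
    rw [Complex.conj_mul', ← Complex.ofReal_pow]
  rw [h, Complex.re_sum]
  exact Finset.sum_congr rfl fun i _ => Complex.ofReal_re _

lemma euclidean_norm_sq {D : ℕ} (f : Fin D → ℂ) :
    ‖(WithLp.equiv 2 (Fin D → ℂ)).symm f‖^2 = ∑ j, ‖f j‖^2 := by
  rw [EuclideanSpace.norm_eq]
  rw [Real.sq_sqrt (Finset.sum_nonneg fun j _ => by positivity)]
  rfl

/-- Majorization theorem: for any collection of product operators `A_k ⊗ B_k` with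
`∑_k A_k†A_k ⊗ B_k†B_k ≤ r·I`, and `ψ` the diagonal matrix of square roots of the
increasingly ordered Schmidt coefficients `λ`, the sum over `k` of the `n` smallest
eigenvalues of `(A_k ψ B_kᵀ)(A_k ψ B_kᵀ)†` is at most `r` times the sum of the `n`
smallest Schmidt coefficients. -/
theorem majorization_chi_bound (D N : ℕ) (hD : 0 < D) (hN : 0 < N)
    (lam : Fin D → ℝ) (hmono : Monotone lam) (h0 : 0 ≤ lam ⟨0, hD⟩)
    (A B : Fin N → Matrix (Fin D) (Fin D) ℂ)
    (r : ℝ)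
    (hr : ((r : ℂ) • (1 : Matrix (Fin D × Fin D) (Fin D × Fin D) ℂ) -
      ∑ k, ((A k)ᴴ * A k) ⊗ₖ ((B k)ᴴ * B k)).PosSemidef)
    (n : ℕ) (hn : n ≤ D) :
    ∑ k, chi (Matrix.isHermitian_mul_conjTranspose_self
        (A k * Matrix.diagonal (fun j => (Real.sqrt (lam j) : ℂ)) * (B k)ᵀ)) n ≤
      r * ∑ j ∈ Finset.univ.filter (fun j : Fin D => (j : ℕ) < n), lam j := by
  classical
  set ψ : Matrix (Fin D) (Fin D) ℂ :=
    Matrix.diagonal (fun j : Fin D => (Real.sqrt (lam j) : ℂ)) with hψ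
  set s1 : Fin D → ℂ := fun j => if (j : ℕ) < n then (Real.sqrt (lam j) : ℂ) else 0 with hs1
  set s2 : Fin D → ℂ := fun j => if (j : ℕ) < n then 0 else (Real.sqrt (lam j) : ℂ) with hs2
  have hsplit : ψ = Matrix.diagonal s1 + Matrix.diagonal s2 := by
    rw [hψ, hs1, hs2, Matrix.diagonal_add]
    apply congrArg Matrix.diagonal
    funext j
    by_cases h : (j : ℕ) < n <;> simp [h]
  set X : Fin N → Matrix (Fin D) (Fin D) ℂ :=
    fun k => A k * Matrix.diagonal s1 * (B k)ᵀ with hX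
  set Y : Fin N → Matrix (Fin D) (Fin D) ℂ :=
    fun k => A k * Matrix.diagonal s2 * (B k)ᵀ with hY
  have hMsplit : ∀ k, A k * ψ * (B k)ᵀ = X k + Y k := by
    intro k
    rw [hsplit, Matrix.mul_add, Matrix.add_mul]
  have hlam0 : ∀ j, 0 ≤ lam j := fun j =>
    le_trans h0 (hmono (Fin.mk_le_of_le_val (Nat.zero_le _)))
  -- entries of X and Y
  have hXapp : ∀ k j m, X k j m = ∑ a, A k j a * s1 a * B k m a := by
    intro k j m
    rw [hX]
    simp only [Matrix.mul_apply, Matrix.transpose_apply, Matrix.diagonal_apply, mul_ite,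
      mul_zero, ite_mul, zero_mul, Finset.sum_ite_eq, Finset.sum_ite_eq', Finset.mem_univ,
      if_true]
  have hYapp : ∀ k j m, Y k j m = ∑ a, A k j a * s2 a * B k m a := by
    intro k j m
    rw [hY]
    simp only [Matrix.mul_apply, Matrix.transpose_apply, Matrix.diagonal_apply, mul_ite,
      mul_zero, ite_mul, zero_mul, Finset.sum_ite_eq, Finset.sum_ite_eq', Finset.mem_univ,
      if_true]
  -- Step 1 : per-k Frobenius bound
  have step1 : ∀ k, chi (Matrix.isHermitian_mul_conjTranspose_self (A k * ψ * (B k)ᵀ)) n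
      ≤ ∑ m, ∑ j, ‖X k j m‖^2 := by
    intro k
    obtain ⟨u, hu, hperp⟩ := exists_orthonormal_killing hn
      (fun a => (WithLp.equiv 2 (Fin D → ℂ)).symm (fun j => A k j a))
    have hperp' : ∀ (i : Fin n) (a : Fin D), n ≤ (a : ℕ) →
        star (fun j => A k j a) ⬝ᵥ (WithLp.equiv 2 (Fin D → ℂ)) (u i) = 0 :=
      fun i a ha => by rw [dotProduct_comm]; exact hperp i a ha
    have hkill : ∀ i, (Y k)ᴴ *ᵥ (WithLp.equiv 2 (Fin D → ℂ)) (u i) = 0 := by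
      intro i
      funext m
      show ((Y k)ᴴ *ᵥ (WithLp.equiv 2 (Fin D → ℂ)) (u i)) m = (0 : ℂ)
      have expand : ((Y k)ᴴ *ᵥ (WithLp.equiv 2 (Fin D → ℂ)) (u i)) m
          = ∑ a, star (s2 a * B k m a) *
            (star (fun j => A k j a) ⬝ᵥ (WithLp.equiv 2 (Fin D → ℂ)) (u i)) := by
        have l1 : ((Y k)ᴴ *ᵥ (WithLp.equiv 2 (Fin D → ℂ)) (u i)) m
            = ∑ j, star (Y k j m) * ((WithLp.equiv 2 (Fin D → ℂ)) (u i)) j := by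
          simp only [Matrix.mulVec, dotProduct, Matrix.conjTranspose_apply]
        rw [l1]
        have l2 : ∀ j, star (Y k j m) * ((WithLp.equiv 2 (Fin D → ℂ)) (u i)) j
            = ∑ a, star (s2 a * B k m a) *
                (star (A k j a) * ((WithLp.equiv 2 (Fin D → ℂ)) (u i)) j) := by
          intro j
          rw [hYapp k j m, star_sum, Finset.sum_mul]
          refine Finset.sum_congr rfl fun a _ => ?_
          simp only [star_mul']
          ring
        rw [Finset.sum_congr rfl fun j (_ : j ∈ Finset.univ) => l2 j, Finset.sum_comm]
        refine Finset.sum_congr rfl fun a _ => ?_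
        simp only [dotProduct, Pi.star_apply, Finset.mul_sum]
      rw [expand]
      refine Finset.sum_eq_zero fun a _ => ?_
      by_cases ha : (a : ℕ) < n
      · have : s2 a = 0 := by simp [hs2, ha]
        rw [this]
        simp
      · rw [hperp' i a (not_lt.mp ha), mul_zero]
    have hquad : ∀ i,
        star ((WithLp.equiv 2 (Fin D → ℂ)) (u i)) ⬝ᵥ
          ((A k * ψ * (B k)ᵀ) * (A k * ψ * (B k)ᵀ)ᴴ) *ᵥ ((WithLp.equiv 2 (Fin D → ℂ)) (u i))
        = star ((X k)ᴴ *ᵥ (WithLp.equiv 2 (Fin D → ℂ)) (u i)) ⬝ᵥ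
            ((X k)ᴴ *ᵥ (WithLp.equiv 2 (Fin D → ℂ)) (u i)) := by
      intro i
      set w : Fin D → ℂ := (WithLp.equiv 2 (Fin D → ℂ)) (u i) with hw
      set Mk : Matrix (Fin D) (Fin D) ℂ := A k * ψ * (B k)ᵀ with hMk
      have h1 : Mkᴴ *ᵥ w = (X k)ᴴ *ᵥ w := by
        rw [hMk, hMsplit k, Matrix.conjTranspose_add, Matrix.add_mulVec, hkill i, add_zero]
      calc star w ⬝ᵥ (Mk * Mkᴴ) *ᵥ w
          = star w ⬝ᵥ Mk *ᵥ (Mkᴴ *ᵥ w) := by rw [Matrix.mulVec_mulVec]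
        _ = (star w ᵥ* Mk) ⬝ᵥ (Mkᴴ *ᵥ w) := Matrix.dotProduct_mulVec _ _ _
        _ = star (Mkᴴ *ᵥ w) ⬝ᵥ (Mkᴴ *ᵥ w) := by
            rw [Matrix.star_mulVec, Matrix.conjTranspose_conjTranspose]
        _ = star ((X k)ᴴ *ᵥ w) ⬝ᵥ ((X k)ᴴ *ᵥ w) := by rw [h1]
    have hchi := chi_le_sum_quadform
      (Matrix.isHermitian_mul_conjTranspose_self (A k * ψ * (B k)ᵀ)) hn u hu
    refine le_trans hchi ?_
    have hz : ∀ i, (star ((WithLp.equiv 2 (Fin D → ℂ)) (u i)) ⬝ᵥ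
        ((A k * ψ * (B k)ᵀ) * (A k * ψ * (B k)ᵀ)ᴴ) *ᵥ ((WithLp.equiv 2 (Fin D → ℂ)) (u i))).re
        = ∑ m, ‖((X k)ᴴ *ᵥ (WithLp.equiv 2 (Fin D → ℂ)) (u i)) m‖^2 := by
      intro i
      rw [hquad i, star_dot_self_re]
    rw [Finset.sum_congr rfl fun i (_ : i ∈ Finset.univ) => hz i]
    rw [Finset.sum_comm]
    refine Finset.sum_le_sum fun m _ => ?_
    -- Bessel for column m of X k
    have hcol : ∀ i, ((X k)ᴴ *ᵥ (WithLp.equiv 2 (Fin D → ℂ)) (u i)) m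
        = ⟪(WithLp.equiv 2 (Fin D → ℂ)).symm (fun j => X k j m), u i⟫ := by
      intro i
      rw [EuclideanSpace.inner_eq_star_dotProduct, dotProduct_comm]; rfl
    have bessel := hu.sum_inner_products_le (𝕜 := ℂ) (s := Finset.univ)
      ((WithLp.equiv 2 (Fin D → ℂ)).symm (fun j => X k j m))
    calc ∑ i, ‖((X k)ᴴ *ᵥ (WithLp.equiv 2 (Fin D → ℂ)) (u i)) m‖^2
        = ∑ i, ‖⟪u i, (WithLp.equiv 2 (Fin D → ℂ)).symm (fun j => X k j m)⟫‖^2 := by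
          refine Finset.sum_congr rfl fun i _ => ?_
          rw [hcol i, ← norm_inner_symm]
      _ ≤ ‖(WithLp.equiv 2 (Fin D → ℂ)).symm (fun j => X k j m)‖^2 := bessel
      _ = ∑ j, ‖X k j m‖^2 := euclidean_norm_sq _
  -- Step 2 : global bound
  set v : Fin D × Fin D → ℂ := fun p => if p.1 = p.2 then s1 p.1 else 0 with hv
  have hw : ∀ k, (((A k) ⊗ₖ (B k)) *ᵥ v) = fun p : Fin D × Fin D => X k p.1 p.2 := by
    intro k
    funext p
    show ∑ q, ((A k) ⊗ₖ (B k)) p q * v q = X k p.1 p.2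
    rw [hXapp k p.1 p.2, Fintype.sum_prod_type]
    have hin : ∀ a : Fin D, ∑ b, ((A k) ⊗ₖ (B k)) p (a, b) * v (a, b)
        = A k p.1 a * s1 a * B k p.2 a := by
      intro a
      rw [Finset.sum_eq_single a]
      · simp only [hv, Matrix.kroneckerMap_apply, if_pos rfl]
        ring
      · intro b _ hb
        have : a ≠ b := Ne.symm hb
        simp [hv, this]
      · simp
    rw [Finset.sum_congr rfl fun a (_ : a ∈ Finset.univ) => hin a]
  have kronCT : ∀ k, ((A k)ᴴ * A k) ⊗ₖ ((B k)ᴴ * B k)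
      = ((A k) ⊗ₖ (B k))ᴴ * ((A k) ⊗ₖ (B k)) := by
    intro k
    have hct : ((A k) ⊗ₖ (B k))ᴴ = (A k)ᴴ ⊗ₖ (B k)ᴴ := by
      ext p q
      simp only [Matrix.conjTranspose_apply, Matrix.kroneckerMap_apply, star_mul']
    rw [hct, ← Matrix.mul_kronecker_mul]
  have frob : ∀ k, ∑ m, ∑ j, ‖X k j m‖^2
      = (star v ⬝ᵥ ((((A k)ᴴ * A k) ⊗ₖ ((B k)ᴴ * B k)) *ᵥ v)).re := by
    intro k
    have h1 : star v ⬝ᵥ ((((A k)ᴴ * A k) ⊗ₖ ((B k)ᴴ * B k)) *ᵥ v)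
        = star (((A k) ⊗ₖ (B k)) *ᵥ v) ⬝ᵥ (((A k) ⊗ₖ (B k)) *ᵥ v) := by
      rw [kronCT k, ← Matrix.mulVec_mulVec, Matrix.dotProduct_mulVec, ← Matrix.star_mulVec]
    rw [h1, star_dot_self_re, hw k, Fintype.sum_prod_type]
    exact Finset.sum_comm
  have hRsum : (∑ k, ((A k)ᴴ * A k) ⊗ₖ ((B k)ᴴ * B k)) *ᵥ v
      = ∑ k, (((A k)ᴴ * A k) ⊗ₖ ((B k)ᴴ * B k)) *ᵥ v := by
    funext p
    simp only [Matrix.mulVec, dotProduct, Matrix.sum_apply, Finset.sum_apply,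
      Finset.sum_mul]
    exact Finset.sum_comm
  have hdot_sum : star v ⬝ᵥ (∑ k, (((A k)ᴴ * A k) ⊗ₖ ((B k)ᴴ * B k)) *ᵥ v)
      = ∑ k, star v ⬝ᵥ ((((A k)ᴴ * A k) ⊗ₖ ((B k)ᴴ * B k)) *ᵥ v) := by
    simp only [dotProduct, Finset.sum_apply, Finset.mul_sum]
    exact Finset.sum_comm
  have hvnorm : (star v ⬝ᵥ v).re
      = ∑ j ∈ Finset.univ.filter (fun j : Fin D => (j : ℕ) < n), lam j := by
    rw [star_dot_self_re, Fintype.sum_prod_type]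
    have hin : ∀ a : Fin D, ∑ b, ‖v (a, b)‖^2 = if (a : ℕ) < n then lam a else 0 := by
      intro a
      rw [Finset.sum_eq_single a]
      · by_cases h : (a : ℕ) < n
        · have hs : ‖((Real.sqrt (lam a) : ℝ) : ℂ)‖^2 = lam a := by
            rw [Complex.norm_real, Real.norm_eq_abs, abs_of_nonneg (Real.sqrt_nonneg _),
              Real.sq_sqrt (hlam0 a)]
          simp only [hv, hs1]
          simp [h, Real.sq_sqrt (hlam0 a)]
        · simp [hv, hs1, h]
      · intro b _ hb
        have : a ≠ b := Ne.symm hb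
        simp [hv, this]
      · simp
    rw [Finset.sum_congr rfl fun a (_ : a ∈ Finset.univ) => hin a]
    exact (Finset.sum_filter _ _).symm
  have hfinal : ∑ k, (star v ⬝ᵥ ((((A k)ᴴ * A k) ⊗ₖ ((B k)ᴴ * B k)) *ᵥ v)).re
      ≤ r * ∑ j ∈ Finset.univ.filter (fun j : Fin D => (j : ℕ) < n), lam j := by
    have h1 : star v ⬝ᵥ (((r : ℂ) • (1 : Matrix (Fin D × Fin D) (Fin D × Fin D) ℂ) -
          ∑ k, ((A k)ᴴ * A k) ⊗ₖ ((B k)ᴴ * B k)) *ᵥ v)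
        = (r : ℂ) * (star v ⬝ᵥ v)
          - ∑ k, star v ⬝ᵥ ((((A k)ᴴ * A k) ⊗ₖ ((B k)ᴴ * B k)) *ᵥ v) := by
      rw [Matrix.sub_mulVec, dotProduct_sub, Matrix.smul_mulVec,
        Matrix.one_mulVec, dotProduct_smul, smul_eq_mul, hRsum, hdot_sum]
    have h2 := (Complex.le_def.mp (hr.dotProduct_mulVec_nonneg v)).1
    rw [h1] at h2
    rw [Complex.zero_re, Complex.sub_re, Complex.re_ofReal_mul, Complex.re_sum] at h2
    rw [hvnorm] at h2
    linarith
  calc ∑ k, chi (Matrix.isHermitian_mul_conjTranspose_self (A k * ψ * (B k)ᵀ)) n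
      ≤ ∑ k, ∑ m, ∑ j, ‖X k j m‖^2 := Finset.sum_le_sum fun k _ => step1 k
    _ = ∑ k, (star v ⬝ᵥ ((((A k)ᴴ * A k) ⊗ₖ ((B k)ᴴ * B k)) *ᵥ v)).re :=
        Finset.sum_congr rfl fun k _ => frob k
    _ ≤ r * ∑ j ∈ Finset.univ.filter (fun j : Fin D => (j : ℕ) < n), lam j := hfinal
end

section
/- Let D, M, N be positive integers. For m ∈ {1,…,M} let A_m and B_m be D²×D² complex matrices (with rows and columns indexed by pairs from Fin D × Fin D) satisfying the closure condition ∑_m (A_m†A_m) ⊗ (B_m†B_m) = I. Let φ and ψ_1,…,ψ_N be invertible D×D complex matrices, and let c_{m,i} be complex numbers with ∑_{m=1}^M |c_{m,i}|² = 1 for every i, such that A_m · (ψ_i ⊗ φ) · B_mᵀ = c_{m,i} · (ψ_i ⊗ ψ_i) for all m and i. Then |det ψ_i| = |det ψ_j| for all i, j (all the states ψ_i have the same G-concurrence), and |c_{m,i}| = |c_{m,j}| for all m, i, j (the probabilities p_{m,i} = |c_{m,i}|² are independent of which state is input). -/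
open Matrix Kronecker

/-- If a separable operation deterministically clones each of the full-Schmidt-rank
states `ψ_i` using the blank state `φ` (in map-state duality form), then all `ψ_i`
have equal `|det|` (equal G-concurrence), and the probabilities `|c_{m,i}|²` are
independent of which state is input. -/
theorem local_cloning_equal_det (D M N : ℕ) (hD : 0 < D) (hM : 0 < M) (hN : 0 < N)
    (A B : Fin M → Matrix (Fin D × Fin D) (Fin D × Fin D) ℂ)
    (hclosure : ∑ m, ((A m)ᴴ * A m) ⊗ₖ ((B m)ᴴ * B m) = 1)
    (φ : Matrix (Fin D) (Fin D) ℂ) (hφ : IsUnit φ)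
    (ψ : Fin N → Matrix (Fin D) (Fin D) ℂ) (hψ : ∀ i, IsUnit (ψ i))
    (c : Fin M → Fin N → ℂ)
    (hc : ∀ i, ∑ m, ‖c m i‖ ^ 2 = 1)
    (hmap : ∀ m i, A m * ((ψ i) ⊗ₖ φ) * (B m)ᵀ = c m i • ((ψ i) ⊗ₖ (ψ i))) :
    (∀ i j, ‖(ψ i).det‖ = ‖(ψ j).det‖) ∧
    (∀ m i j, ‖c m i‖ = ‖c m j‖) := by
  -- abbreviations
  set a : Fin M → Fin N → ℝ := fun m i => ‖c m i‖ with ha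
  set x : Fin N → ℝ := fun i => ‖(ψ i).det‖ with hxdef
  have hxpos : ∀ i, 0 < x i := fun i =>
    norm_pos_iff.mpr (((Matrix.isUnit_iff_isUnit_det _).mp (hψ i)).ne_zero)
  have hanonneg : ∀ m i, 0 ≤ a m i := fun m i => norm_nonneg _
  -- key determinant identity
  have hK : ∀ m i, a m i ^ (D * D) * x i ^ D
      = ‖(A m).det‖ * ‖(B m).det‖ * ‖φ.det‖ ^ D := by
    intro m i
    have hdet := congrArg Matrix.det (hmap m i)
    rw [Matrix.det_mul, Matrix.det_mul, Matrix.det_transpose, Matrix.det_kronecker,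
        Matrix.det_smul, Matrix.det_kronecker] at hdet
    simp only [Fintype.card_prod, Fintype.card_fin] at hdet
    have habs := congrArg (‖·‖) hdet
    simp only [norm_mul, norm_pow] at habs
    have hx0 : x i ^ D ≠ 0 := pow_ne_zero _ (hxpos i).ne'
    apply mul_right_cancel₀ hx0
    calc a m i ^ (D * D) * x i ^ D * x i ^ D
        = ‖c m i‖ ^ (D * D) *
            (‖(ψ i).det‖ ^ D * ‖(ψ i).det‖ ^ D) := by
          simp only [ha, hxdef]; ring
      _ = ‖(A m).det‖ *
            (‖(ψ i).det‖ ^ D * ‖φ.det‖ ^ D) *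
            ‖(B m).det‖ := habs.symm
      _ = ‖(A m).det‖ * ‖(B m).det‖ * ‖φ.det‖ ^ D
            * x i ^ D := by simp only [hxdef]; ring
  have hDD : D * D ≠ 0 := Nat.mul_ne_zero hD.ne' hD.ne'
  -- if x j ≤ x i then a m i = a m j for all m
  have key : ∀ i j, x j ≤ x i → ∀ m, a m i = a m j := by
    intro i j hle
    have hmono : ∀ m, a m i ≤ a m j := by
      intro m
      have heq : a m i ^ (D * D) * x i ^ D = a m j ^ (D * D) * x j ^ D :=
        (hK m i).trans (hK m j).symm
      have hxp : x j ^ D ≤ x i ^ D := pow_le_pow_left₀ (hxpos j).le hle D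
      have h1 : a m i ^ (D * D) ≤ a m j ^ (D * D) := by
        nlinarith [pow_pos (hxpos i) D, pow_pos (hxpos j) D,
          pow_nonneg (hanonneg m i) (D * D), pow_nonneg (hanonneg m j) (D * D)]
      exact (pow_le_pow_iff_left₀ (hanonneg m i) (hanonneg m j) hDD).mp h1
    have hsq : ∀ m, a m i ^ 2 = a m j ^ 2 := by
      have hsum : ∑ m, a m i ^ 2 = ∑ m, a m j ^ 2 := by
        rw [hc i, hc j]
      have hle2 : ∀ m ∈ Finset.univ, a m i ^ 2 ≤ a m j ^ 2 := fun m _ =>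
        pow_le_pow_left₀ (hanonneg m i) (hmono m) 2
      intro m
      exact (Finset.sum_eq_sum_iff_of_le hle2).mp hsum m (Finset.mem_univ m)
    intro m
    exact (pow_left_inj₀ (hanonneg m i) (hanonneg m j) two_ne_zero).mp (hsq m)
  -- if x j ≤ x i then x i = x j
  have detEq : ∀ i j, x j ≤ x i → x i = x j := by
    intro i j hle
    obtain ⟨m, hm⟩ : ∃ m, a m i ≠ 0 := by
      by_contra h
      push_neg at h
      have := hc i
      simp only [ha] at h
      rw [Finset.sum_eq_zero (fun m _ => by rw [h m]; ring)] at this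
      exact one_ne_zero this.symm
    have heq : a m i ^ (D * D) * x i ^ D = a m i ^ (D * D) * x j ^ D := by
      have h1 := hK m i
      have h2 := hK m j
      rw [key i j hle m] at h1
      rw [key i j hle m]
      exact h1.trans h2.symm
    have hxp : x i ^ D = x j ^ D :=
      mul_left_cancel₀ (pow_ne_zero _ hm) heq
    exact (pow_left_inj₀ (hxpos i).le (hxpos j).le hD.ne').mp hxp
  constructor
  · intro i j
    rcases le_total (x j) (x i) with h | h
    · exact detEq i j h
    · exact (detEq j i h).symm
  · intro m i j
    rcases le_total (x j) (x i) with h | h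
    · exact key i j h m
    · exact (key j i h m).symm
end

section
/- Let G be a finite group and λ : G → ℝ a function with λ(g) ≥ 0 for all g ∈ G and ∑_{g∈G} λ(g) = 1, and define q : G → ℝ by q(r) = ∑_{f∈G} λ(f)·λ(f·r). Then q is majorized by λ in the following sense: for every subset A ⊆ G there exists a subset B ⊆ G with |B| = |A| such that ∑_{r∈A} q(r) ≤ ∑_{g∈B} λ(g). -/
/-- The probability vector `q(r) = ∑_f λ(f)·λ(f·r)` is majorized by `λ`: the sum of `q`
over any subset `A` of the group is bounded by the sum of `λ` over some subset of the
same cardinality. -/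
theorem convolution_majorized (G : Type*) [Group G] [Fintype G]
    (lam : G → ℝ) (hnn : ∀ g, 0 ≤ lam g) (hsum : ∑ g, lam g = 1) :
    ∀ A : Finset G, ∃ B : Finset G, B.card = A.card ∧
      ∑ r ∈ A, (∑ f, lam f * lam (f * r)) ≤ ∑ g ∈ B, lam g := by
  classical
  intro A
  obtain ⟨B, hB, hmax⟩ := Finset.exists_max_image (Finset.univ.powersetCard A.card)
    (fun B => ∑ g ∈ B, lam g) ⟨A, by simp⟩
  refine ⟨B, (Finset.mem_powersetCard.mp hB).2, ?_⟩
  rw [Finset.sum_comm]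
  calc ∑ f, ∑ r ∈ A, lam f * lam (f * r)
      = ∑ f, lam f * ∑ r ∈ A, lam (f * r) := by simp [Finset.mul_sum]
    _ ≤ ∑ f : G, lam f * ∑ g ∈ B, lam g := by
        apply Finset.sum_le_sum
        intro f _
        apply mul_le_mul_of_nonneg_left _ (hnn f)
        have h : ∑ r ∈ A, lam (f * r) = ∑ g ∈ A.image (f * ·), lam g := by
          rw [Finset.sum_image]; intro x _ y _ h; exact mul_left_cancel h
        rw [h]
        apply hmax
        rw [Finset.mem_powersetCard]
        exact ⟨Finset.subset_univ _,
          Finset.card_image_of_injective _ (mul_right_injective f)⟩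
    _ = ∑ g ∈ B, lam g := by rw [← Finset.sum_mul, hsum, one_mul]
end

section
/- Let G be a finite group and λ : G → ℝ a function with λ(g) > 0 for all g ∈ G, ∑_{g∈G} λ(g) = 1, and λ not constant (there exist g, h ∈ G with λ(g) ≠ λ(h)); define q : G → ℝ by q(r) = ∑_{f∈G} λ(f)·λ(f·r). Then the Shannon entropies satisfy the strict inequality −∑_{r∈G} q(r)·log q(r) > −∑_{g∈G} λ(g)·log λ(g). -/
/-- Strict entropy gap: if `λ` is a strictly positive, non-constant probability vector
on a finite group `G` and `q(r) = ∑_f λ(f)·λ(f·r)`, then the Shannon entropy of `q`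
is strictly larger than that of `λ`. -/
theorem entropy_strict_gap (G : Type*) [Group G] [Fintype G]
    (lam : G → ℝ) (hpos : ∀ g, 0 < lam g) (hsum : ∑ g, lam g = 1)
    (hnc : ∃ g h : G, lam g ≠ lam h) :
    (-∑ g, lam g * Real.log (lam g)) <
      -∑ r, (∑ f, lam f * lam (f * r)) * Real.log (∑ f, lam f * lam (f * r)) := by
  have hne : (Finset.univ : Finset G).Nonempty := Finset.univ_nonempty
  have key : ∀ r : G,
      ∑ f, lam f * Real.negMulLog (lam (f * r)) <
        Real.negMulLog (∑ f, lam f * lam (f * r)) := by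
    intro r
    have := Real.strictConcaveOn_negMulLog.lt_map_sum
      (t := Finset.univ) (w := lam) (p := fun f => lam (f * r))
      (fun i _ => hpos i) hsum (fun i _ => (hpos _).le) ?_
    · simpa [smul_eq_mul] using this
    · obtain ⟨g, h, hgh⟩ := hnc
      exact ⟨g * r⁻¹, Finset.mem_univ _, h * r⁻¹, Finset.mem_univ _, by
        simpa [mul_assoc] using hgh⟩
  have hL : ∀ f : G, ∑ r, Real.negMulLog (lam (f * r)) = ∑ g, Real.negMulLog (lam g) :=
    fun f => Fintype.sum_equiv (Equiv.mulLeft f) _ _ (fun r => rfl)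
  have sum1 : ∑ r, ∑ f, lam f * Real.negMulLog (lam (f * r))
      = ∑ g, Real.negMulLog (lam g) := by
    rw [Finset.sum_comm]
    simp_rw [← Finset.mul_sum, hL]
    rw [← Finset.sum_mul, hsum, one_mul]
  have main : ∑ g, Real.negMulLog (lam g) <
      ∑ r, Real.negMulLog (∑ f, lam f * lam (f * r)) := by
    rw [← sum1]
    exact Finset.sum_lt_sum_of_nonempty hne fun r _ => key r
  have e1 : (-∑ g, lam g * Real.log (lam g)) = ∑ g, Real.negMulLog (lam g) := by
    rw [← Finset.sum_neg_distrib]; simp [Real.negMulLog]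
  have e2 : (-∑ r, (∑ f, lam f * lam (f * r)) * Real.log (∑ f, lam f * lam (f * r)))
      = ∑ r, Real.negMulLog (∑ f, lam f * lam (f * r)) := by
    rw [← Finset.sum_neg_distrib]; simp [Real.negMulLog]
  rw [e1, e2]; exact main
end

section
/- Let D and n be positive integers, and let C be an additive subgroup of the group (ZMod D)ⁿ of functions Fin n → ZMod D under componentwise addition mod D. Define S := { s : Fin n → ZMod D | for every c ∈ C, ∑_{i} c(i)·s(i) = 0 in ZMod D }. Then: (a) C is maximal relative to S, i.e. { c : Fin n → ZMod D | for every s ∈ S, ∑_{i} c(i)·s(i) = 0 } = C; and (b) the cardinalities satisfy |C| · |S| = Dⁿ. -/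
variable {D : ℕ} [NeZero D]

instance instEnough : HasEnoughRootsOfUnity (Multiplicative (ZMod D)) D where
  prim := by
    have h : orderOf (Multiplicative.ofAdd (1 : ZMod D)) = D := by
      rw [orderOf_ofAdd_eq_addOrderOf]; exact ZMod.addOrderOf_one D
    have h2 := IsPrimitiveRoot.orderOf (Multiplicative.ofAdd (1 : ZMod D))
    rw [h] at h2
    exact ⟨_, h2⟩
  cyc := by
    have h2 : IsCyclic (Multiplicative (ZMod D))ˣ :=
      isCyclic_of_surjective (toUnits (G := Multiplicative (ZMod D)))
        (toUnits (G := Multiplicative (ZMod D))).surjective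
    infer_instance

section N
variable (N : Type) [AddCommGroup N] [Module (ZMod D) N] [Finite N]

omit [NeZero D] [Finite N] in
lemma exponent_dvd_D : Monoid.exponent (Multiplicative N) ∣ D := by
  refine Monoid.exponent_dvd_of_forall_pow_eq_one fun g => ?_
  have : D • (Multiplicative.toAdd g) = 0 := by
    have : ((D : ZMod D)) • (Multiplicative.toAdd g) = 0 := by
      simp [ZMod.natCast_self]
    rwa [Nat.cast_smul_eq_nsmul] at this
  exact this

lemma card_linear_dual : Nat.card (N →ₗ[ZMod D] ZMod D) = Nat.card N := by
  haveI : HasEnoughRootsOfUnity (Multiplicative (ZMod D)) (Monoid.exponent (Multiplicative N)) :=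
    HasEnoughRootsOfUnity.of_dvd _ (n := D) (exponent_dvd_D N)
  obtain ⟨e⟩ := CommGroup.monoidHom_mulEquiv_of_hasEnoughRootsOfUnity
    (Multiplicative N) (Multiplicative (ZMod D))
  have e1 : (N →ₗ[ZMod D] ZMod D) ≃ (N →+ ZMod D) :=
    { toFun := LinearMap.toAddMonoidHom
      invFun := AddMonoidHom.toZModLinearMap D
      left_inv := fun f => rfl
      right_inv := fun f => rfl }
  have e2 : (N →+ ZMod D) ≃ (Multiplicative N →* Multiplicative (ZMod D)) :=
    AddMonoidHom.toMultiplicative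
  have e3 : (Multiplicative N →* Multiplicative (ZMod D)) ≃
      (Multiplicative N →* (Multiplicative (ZMod D))ˣ) :=
    MulEquiv.monoidHomCongrRightEquiv (toUnits (G := Multiplicative (ZMod D)))
  calc Nat.card (N →ₗ[ZMod D] ZMod D)
      = Nat.card (Multiplicative N →* (Multiplicative (ZMod D))ˣ) :=
        Nat.card_congr (e1.trans (e2.trans e3))
    _ = Nat.card (Multiplicative N) := Nat.card_congr e.toEquiv
    _ = Nat.card N := rfl

lemma exists_linear_ne_zero {x : N} (hx : x ≠ 0) :
    ∃ φ : N →ₗ[ZMod D] ZMod D, φ x ≠ 0 := by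
  haveI : HasEnoughRootsOfUnity (Multiplicative (ZMod D)) (Monoid.exponent (Multiplicative N)) :=
    HasEnoughRootsOfUnity.of_dvd _ (n := D) (exponent_dvd_D N)
  have hx' : (Multiplicative.ofAdd x) ≠ 1 := by
    simpa using hx
  obtain ⟨φ, hφ⟩ := CommGroup.exists_apply_ne_one_of_hasEnoughRootsOfUnity
    (Multiplicative N) (Multiplicative (ZMod D)) hx'
  let ψ : Multiplicative N →* Multiplicative (ZMod D) :=
    ((toUnits (G := Multiplicative (ZMod D))).symm.toMonoidHom).comp φ
  refine ⟨(AddMonoidHom.toMultiplicative.symm ψ).toZModLinearMap D, ?_⟩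
  simp only [AddMonoidHom.coe_toZModLinearMap]
  intro h
  apply hφ
  have : ψ (Multiplicative.ofAdd x) = 1 := by
    simpa [ψ] using h
  simpa [ψ, MulEquiv.map_eq_one_iff] using this

end N

section pairing
variable (D n : ℕ)

/-- The functional `c ↦ ∑ i, c i * s i`. -/
def pairAux (s : Fin n → ZMod D) : (Fin n → ZMod D) →ₗ[ZMod D] ZMod D where
  toFun c := ∑ i, c i * s i
  map_add' x y := by simp [add_mul, Finset.sum_add_distrib]
  map_smul' r x := by simp [Finset.mul_sum, mul_assoc]

@[simp] lemma pairAux_apply (s c : Fin n → ZMod D) : pairAux D n s c = ∑ i, c i * s i := rfl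

lemma pairAux_surj (F : (Fin n → ZMod D) →ₗ[ZMod D] ZMod D) :
    ∃ s, pairAux D n s = F := by
  refine ⟨fun i => F (Pi.single i 1), LinearMap.ext fun c => ?_⟩
  have hc : c = ∑ i, Pi.single i (c i) := by
    rw [Finset.univ_sum_single]
  rw [pairAux_apply]
  conv_rhs => rw [hc]
  rw [map_sum]
  congr 1
  ext i
  have h1 : Pi.single i (c i) = c i • (Pi.single i 1 : Fin n → ZMod D) := by
    ext j
    by_cases h : j = i
    · subst h; simp
    · simp [Pi.single_eq_of_ne h]
  rw [h1, map_smul, smul_eq_mul]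

def LAux (C' : Submodule (ZMod D) (Fin n → ZMod D)) :
    (Fin n → ZMod D) →ₗ[ZMod D] (C' →ₗ[ZMod D] ZMod D) where
  toFun s := (pairAux D n s).comp C'.subtype
  map_add' x y := by
    ext c; simp [mul_add, Finset.sum_add_distrib]
  map_smul' r x := by
    ext c; simp [Finset.mul_sum, mul_left_comm]

@[simp] lemma LAux_apply (C' : Submodule (ZMod D) (Fin n → ZMod D)) (s : Fin n → ZMod D)
    (c : C') : LAux D n C' s c = ∑ i, (c : Fin n → ZMod D) i * s i := rfl

lemma range_LAux (C' : Submodule (ZMod D) (Fin n → ZMod D)) :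
    LinearMap.range (LAux D n C') = LinearMap.range C'.dualRestrict := by
  ext f
  simp only [LinearMap.mem_range]
  constructor
  · rintro ⟨s, rfl⟩
    exact ⟨pairAux D n s, rfl⟩
  · rintro ⟨F, rfl⟩
    obtain ⟨s, hs⟩ := pairAux_surj D n F
    exact ⟨s, by rw [← hs]; rfl⟩

end pairing

/-- Duality between an additive graph code and its stabilizer: if `C` is an additive
subgroup of `(ZMod D)ⁿ` and `S` is the set of all `s` with `c·s = 0` for every `c ∈ C`,
then the set of all `c` with `c·s = 0` for every `s ∈ S` equals `C`, and
`|C| · |S| = Dⁿ`. -/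
theorem code_stabilizer_duality (D n : ℕ) (hD : 0 < D) (hn : 0 < n)
    (C : AddSubgroup (Fin n → ZMod D)) :
    ({c : Fin n → ZMod D |
        ∀ s ∈ {s : Fin n → ZMod D | ∀ c' ∈ C, ∑ i, c' i * s i = 0}, ∑ i, c i * s i = 0}
      = (C : Set (Fin n → ZMod D))) ∧
    Nat.card C * Nat.card {s : Fin n → ZMod D | ∀ c ∈ C, ∑ i, c i * s i = 0} = D ^ n := by
  haveI : NeZero D := ⟨hD.ne'⟩
  let C' : Submodule (ZMod D) (Fin n → ZMod D) := AddSubgroup.toZModSubmodule D C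
  haveI : Finite ((Fin n → ZMod D) ⧸ C') := Quotient.finite _
  set L := LAux D n C' with hL
  -- the stabilizer set is the kernel of L
  have hSset : {s : Fin n → ZMod D | ∀ c ∈ C, ∑ i, c i * s i = 0} = (LinearMap.ker L : Set (Fin n → ZMod D)) := by
    ext s
    simp only [Set.mem_setOf_eq, SetLike.mem_coe, LinearMap.mem_ker]
    constructor
    · intro h
      refine LinearMap.ext fun c => ?_
      simpa [hL] using h c c.2
    · intro h c hc
      have := congrArg (fun f => f ⟨c, hc⟩) h
      simpa [hL] using this
  -- separating functionals
  have hsep : ∀ c : Fin n → ZMod D, c ∉ C →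
      ∃ s : Fin n → ZMod D, (∀ c' ∈ C, ∑ i, c' i * s i = 0) ∧ ∑ i, c i * s i ≠ 0 := by
    intro c hc
    have hx : (Submodule.Quotient.mk c : (Fin n → ZMod D) ⧸ C') ≠ 0 := by
      simpa [Submodule.Quotient.mk_eq_zero, C'] using hc
    obtain ⟨φ, hφ⟩ := exists_linear_ne_zero (D := D) ((Fin n → ZMod D) ⧸ C') hx
    obtain ⟨s, hs⟩ := pairAux_surj D n (φ.comp C'.mkQ)
    have hsval : ∀ y : Fin n → ZMod D, ∑ i, y i * s i = φ (Submodule.Quotient.mk y) := by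
      intro y
      have := congrArg (fun f => f y) hs
      simpa using this
    refine ⟨s, fun c' hc' => ?_, ?_⟩
    · rw [hsval c']
      have : (Submodule.Quotient.mk c' : (Fin n → ZMod D) ⧸ C') = 0 := (Submodule.Quotient.mk_eq_zero _).2 hc'
      rw [this, map_zero]
    · rw [hsval c]
      exact hφ
  constructor
  · -- part (a)
    ext c
    simp only [Set.mem_setOf_eq, SetLike.mem_coe]
    constructor
    · intro h
      by_contra hc
      obtain ⟨s, hs1, hs2⟩ := hsep c hc
      exact hs2 (h s hs1)
    · intro hc s hs
      exact hs c hc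
  · -- part (b)
    have cardM : Nat.card (Fin n → ZMod D) = D ^ n := by
      simp [Nat.card_pi, Nat.card_zmod]
    -- card of S
    have hcardS : Nat.card {s : Fin n → ZMod D | ∀ c ∈ C, ∑ i, c i * s i = 0}
        = Nat.card (LinearMap.ker L) := by
      exact Nat.card_congr (Equiv.setCongr hSset)
    -- card C = card C'
    have hcardC : Nat.card C = Nat.card C' := rfl
    -- first isomorphism applied to L
    have h1 : Nat.card (Fin n → ZMod D) = Nat.card (LinearMap.ker L) * Nat.card ((Fin n → ZMod D) ⧸ LinearMap.ker L) :=
      Submodule.card_eq_card_quotient_mul_card _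
    have h2 : Nat.card ((Fin n → ZMod D) ⧸ LinearMap.ker L) = Nat.card (LinearMap.range L) :=
      Nat.card_congr (LinearMap.quotKerEquivRange L).toEquiv
    have h3 : Nat.card (LinearMap.range L) = Nat.card (LinearMap.range C'.dualRestrict) := by
      rw [hL, range_LAux]
    -- first isomorphism applied to the restriction map Φ
    have h4 : Nat.card (Module.Dual (ZMod D) (Fin n → ZMod D))
        = Nat.card (LinearMap.ker C'.dualRestrict) * Nat.card (Module.Dual (ZMod D) (Fin n → ZMod D) ⧸ LinearMap.ker C'.dualRestrict) :=
      Submodule.card_eq_card_quotient_mul_card _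
    have h5 : Nat.card (Module.Dual (ZMod D) (Fin n → ZMod D) ⧸ LinearMap.ker C'.dualRestrict)
        = Nat.card (LinearMap.range C'.dualRestrict) :=
      Nat.card_congr (LinearMap.quotKerEquivRange _).toEquiv
    have h6 : Nat.card (LinearMap.ker C'.dualRestrict) = Nat.card ((Fin n → ZMod D) ⧸ C') := by
      rw [Submodule.dualRestrict_ker_eq_dualAnnihilator]
      rw [← Nat.card_congr (Submodule.dualQuotEquivDualAnnihilator C').toEquiv]
      exact card_linear_dual ((Fin n → ZMod D) ⧸ C')
    have h7 : Nat.card (Module.Dual (ZMod D) (Fin n → ZMod D)) = D ^ n := by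
      rw [card_linear_dual (Fin n → ZMod D), cardM]
    have h8 : Nat.card C' * Nat.card ((Fin n → ZMod D) ⧸ C') = D ^ n := by
      rw [← cardM]; exact (Submodule.card_eq_card_quotient_mul_card C').symm
    -- positivity
    have hq : 0 < Nat.card ((Fin n → ZMod D) ⧸ C') := Nat.card_pos
    -- range card = card C'
    have h9 : Nat.card (LinearMap.range C'.dualRestrict) * Nat.card ((Fin n → ZMod D) ⧸ C') = D ^ n := by
      rw [← h7, h4, h6, h5]; ring
    have h10 : Nat.card (LinearMap.range C'.dualRestrict) = Nat.card C' :=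
      Nat.eq_of_mul_eq_mul_right hq (by rw [h9, h8])
    rw [hcardS, hcardC]
    calc Nat.card C' * Nat.card (LinearMap.ker L)
        = Nat.card (LinearMap.ker L) * Nat.card (LinearMap.range C'.dualRestrict) := by
          rw [h10]; ring
      _ = Nat.card (LinearMap.ker L) * Nat.card ((Fin n → ZMod D) ⧸ LinearMap.ker L) := by rw [h2, h3]
      _ = D ^ n := by rw [← h1, cardM]
end

section
/- Let D ≥ 1 and n ≥ 1 be integers and Γ : Fin n → Fin n → ℕ an adjacency matrix (so Γ(l,m) = Γ(m,l) for all l, m and Γ(l,l) = 0 for all l). Define the graph-state amplitude g : (Fin n → ZMod D) → ℂ by g(k) = exp((2πi/D)·∑_{l<m} Γ(l,m)·(k l).val·(k m).val). Then for every vertex i ∈ Fin n and every k : Fin n → ZMod D, g(k + δ_i) = exp((2πi/D)·∑_{m} Γ(i,m)·(k m).val) · g(k), where δ_i : Fin n → ZMod D equals 1 at i and 0 elsewhere. (X–Z rule: acting with the shift operator X on qudit i of the graph state |G⟩ produces the same state as acting with Z^{Γ(i,m)} on each neighbor m of i.) -/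
/-- The (unnormalized) amplitude of the graph state of the multigraph with adjacency
matrix `Γ` at the computational basis state `k`. -/
noncomputable def graphStateAmp (D n : ℕ) (Γ : Fin n → Fin n → ℕ)
    (k : Fin n → ZMod D) : ℂ :=
  Complex.exp ((2 * (Real.pi : ℂ) * Complex.I / (D : ℂ)) *
    ∑ p ∈ Finset.univ.filter (fun p : Fin n × Fin n => p.1 < p.2),
      (Γ p.1 p.2 : ℂ) * ((k p.1).val : ℂ) * ((k p.2).val : ℂ))

/-- X–Z rule: acting with the shift operator `X` on qudit `i` of the graph state
produces the same state as acting with `Z^{Γ(i,m)}` on each neighbor `m` of `i`. -/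
theorem xz_rule (D n : ℕ) (hD : 1 ≤ D) (hn : 1 ≤ n)
    (Γ : Fin n → Fin n → ℕ) (hsymm : ∀ l m, Γ l m = Γ m l) (hdiag : ∀ l, Γ l l = 0)
    (i : Fin n) (k : Fin n → ZMod D) :
    graphStateAmp D n Γ (k + fun m => if m = i then 1 else 0) =
      Complex.exp ((2 * (Real.pi : ℂ) * Complex.I / (D : ℂ)) *
          ∑ m, (Γ i m : ℂ) * ((k m).val : ℂ)) *
        graphStateAmp D n Γ k := by
  haveI : NeZero D := ⟨by omega⟩
  set α : ℂ := 2 * (Real.pi : ℂ) * Complex.I / (D : ℂ) with hα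
  set k' : Fin n → ZMod D := k + fun m => if m = i then 1 else 0 with hk'
  set v : Fin n → ℂ := fun m => ((k m).val : ℂ) with hv
  set c : ℕ := ((k i).val + 1) / D with hc
  set ε : ℂ := 1 - (D : ℂ) * (c : ℂ) with hε
  -- value of k' in terms of k
  have hval : (k' i).val + D * c = (k i).val + 1 := by
    have h1 : k' i = k i + 1 := by simp [hk']
    have h2 : (k i + 1).val = ((k i).val + (1 : ZMod D).val) % D := ZMod.val_add _ _
    have h3 : (1 : ZMod D).val = 1 % D := ZMod.val_one_eq_one_mod D
    have h4 : ((k i).val + 1 % D) % D = ((k i).val + 1) % D := by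
      conv_rhs => rw [Nat.add_mod]
      rw [Nat.add_mod, Nat.mod_mod_of_dvd]
      exact dvd_refl D
    have h5 : ((k i).val + 1) % D + D * (((k i).val + 1) / D) = (k i).val + 1 :=
      Nat.mod_add_div _ _
    rw [h1, h2, h3, h4, hc]
    omega
  have hv' : ∀ m, ((k' m).val : ℂ) = v m + (if m = i then ε else 0) := by
    intro m
    by_cases hm : m = i
    · subst hm
      have : ((k' m).val : ℂ) + (D : ℂ) * (c : ℂ) = v m + 1 := by
        have := congrArg (fun x : ℕ => (x : ℂ)) hval
        push_cast at this
        simpa [hv] using this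
      rw [if_pos rfl, hε]
      linear_combination this
    · have : k' m = k m := by simp [hk', hm]
      rw [this, if_neg hm, add_zero]
  -- rewrite pair sums as double sums
  have hsum : ∀ w : Fin n → ℂ,
      (∑ p ∈ Finset.univ.filter (fun p : Fin n × Fin n => p.1 < p.2),
        (Γ p.1 p.2 : ℂ) * w p.1 * w p.2)
      = ∑ l, ∑ m, if l < m then (Γ l m : ℂ) * w l * w m else 0 := by
    intro w
    rw [Finset.sum_filter, Fintype.sum_prod_type]
  set N : ℂ := ∑ m, (Γ i m : ℂ) * v m with hN
  -- key identity on the double sums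
  have key : (∑ l, ∑ m, if l < m then (Γ l m : ℂ) * ((k' l).val : ℂ) * ((k' m).val : ℂ) else 0)
      = (∑ l, ∑ m, if l < m then (Γ l m : ℂ) * v l * v m else 0) + ε * N := by
    have step1 : (∑ l, ∑ m, if l < m then (Γ l m : ℂ) * ((k' l).val : ℂ) * ((k' m).val : ℂ) else 0)
        = ∑ l, ∑ m, ((if l < m then (Γ l m : ℂ) * v l * v m else 0)
            + ((if l = i then (if l < m then ε * (Γ l m : ℂ) * v m else 0) else 0)
            + (if m = i then (if l < m then ε * (Γ l m : ℂ) * v l else 0) else 0))) := by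
      refine Finset.sum_congr rfl fun l _ => Finset.sum_congr rfl fun m _ => ?_
      rw [hv' l, hv' m]
      by_cases hlm : l < m
      · have hne : l ≠ m := ne_of_lt hlm
        by_cases hl : l = i <;> by_cases hm : m = i
        · exact absurd (hl.trans hm.symm) hne
        · simp only [if_pos hl, if_neg hm, if_pos hlm]; ring
        · simp only [if_neg hl, if_pos hm, if_pos hlm]; ring
        · simp only [if_neg hl, if_neg hm, if_pos hlm]; ring
      · simp [hlm]
    rw [step1]
    have split : ∀ l, (∑ m, ((if l < m then (Γ l m : ℂ) * v l * v m else 0)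
            + ((if l = i then (if l < m then ε * (Γ l m : ℂ) * v m else 0) else 0)
            + (if m = i then (if l < m then ε * (Γ l m : ℂ) * v l else 0) else 0))))
        = (∑ m, (if l < m then (Γ l m : ℂ) * v l * v m else 0))
          + ((∑ m, (if l = i then (if l < m then ε * (Γ l m : ℂ) * v m else 0) else 0))
          + (∑ m, (if m = i then (if l < m then ε * (Γ l m : ℂ) * v l else 0) else 0))) := by
      intro l; rw [Finset.sum_add_distrib, Finset.sum_add_distrib]
    simp only [split]
    rw [Finset.sum_add_distrib, Finset.sum_add_distrib]
    congr 1
    -- remaining: the two correction sums equal ε * N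
    have hA : (∑ l, ∑ m, (if l = i then (if l < m then ε * (Γ l m : ℂ) * v m else 0) else 0))
        = ∑ m, (if i < m then ε * (Γ i m : ℂ) * v m else 0) := by
      rw [Finset.sum_comm]
      refine Finset.sum_congr rfl fun m _ => ?_
      simp
    have hB : (∑ l, ∑ m, (if m = i then (if l < m then ε * (Γ l m : ℂ) * v l else 0) else 0))
        = ∑ l, (if l < i then ε * (Γ l i : ℂ) * v l else 0) := by
      refine Finset.sum_congr rfl fun l _ => ?_
      simp
    rw [hA, hB, hN, Finset.mul_sum, ← Finset.sum_add_distrib]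
    refine Finset.sum_congr rfl fun m _ => ?_
    rcases lt_trichotomy i m with h | h | h
    · rw [if_pos h, if_neg (by omega)]; ring
    · subst h; simp [hdiag]
    · rw [if_neg (by omega), if_pos h, hsymm i m]; ring
  -- assemble
  have hDC : (D : ℂ) ≠ 0 := Nat.cast_ne_zero.mpr (by omega)
  have hαD : α * (D : ℂ) = 2 * (Real.pi : ℂ) * Complex.I := by
    rw [hα]; exact div_mul_cancel₀ _ hDC
  set N₀ : ℕ := ∑ m, Γ i m * (k m).val with hN₀
  have hNnat : (N₀ : ℂ) = N := by
    rw [hN₀, hN]; push_cast; rfl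
  unfold graphStateAmp
  rw [show (2 * (Real.pi : ℂ) * Complex.I / (D : ℂ)) = α from hα.symm,
    hsum (fun m => ((k' m).val : ℂ)), hsum (fun m => ((k m).val : ℂ)), key, ← Complex.exp_add]
  have expand : α * ((∑ l, ∑ m, if l < m then (Γ l m : ℂ) * v l * v m else 0) + ε * N)
      = (α * N + α * (∑ l, ∑ m, if l < m then (Γ l m : ℂ) * v l * v m else 0))
        + ((-(c * N₀) : ℤ) : ℂ) * (2 * (Real.pi : ℂ) * Complex.I) := by
    rw [hε, ← hNnat, ← hαD]
    push_cast
    ring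
  rw [expand, Complex.exp_add, Complex.exp_int_mul_two_pi_mul_I, mul_one, Complex.exp_add]
end

section
/- For every even positive integer D and every natural number k, ∑_{j=0}^{D−1} exp(πi·(j² + 2kj)/D) = √D · exp(πi/4) · exp(−πi·k²/D). -/
set_option maxHeartbeats 1000000

open Complex Real Filter Topology


lemma aux_summable_nat (q : ℝ) (hq0 : 0 < q) (hq1 : q < 1) :
    Summable (fun n : ℕ => (if (n:ℤ) = 0 then (0:ℝ) else q ^ (n:ℤ).natAbs)) := by
  refine Summable.of_nonneg_of_le (fun n => ?_) (fun n => ?_)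
    (summable_geometric_of_lt_one hq0.le hq1)
  · split <;> positivity
  · split
    · positivity
    · simp [Int.natAbs_natCast]

lemma aux_eq_neg (q : ℝ) : (fun n : ℕ => (if (-((n:ℤ)+1)) = 0 then (0:ℝ) else q ^ (-((n:ℤ)+1)).natAbs)) =
    (fun n : ℕ => q ^ (n+1)) := by
  funext n
  rw [if_neg (by omega : (-((n:ℤ)+1)) ≠ 0), show (-((n:ℤ)+1)).natAbs = n + 1 from by omega]

lemma aux_hgeo (q : ℝ) (hq0 : 0 < q) (hq1 : q < 1) :
    HasSum (fun n : ℕ => q ^ (n+1)) (q * (1-q)⁻¹) := by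
  have : (fun n : ℕ => q ^ (n+1)) = fun n => q * q ^ n := funext fun n => pow_succ' q n
  rw [this]
  exact (hasSum_geometric_of_lt_one hq0.le hq1).mul_left q

lemma aux_summable_int (q : ℝ) (hq0 : 0 < q) (hq1 : q < 1) :
    Summable (fun n : ℤ => (if n = 0 then (0:ℝ) else q ^ n.natAbs)) := by
  refine Summable.of_nat_of_neg_add_one (aux_summable_nat q hq0 hq1) ?_
  rw [aux_eq_neg]
  exact (aux_hgeo q hq0 hq1).summable

lemma aux_tsum_int (q : ℝ) (hq0 : 0 < q) (hq1 : q < 1) :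
    ∑' n : ℤ, (if n = 0 then (0:ℝ) else q ^ n.natAbs) = 2 * (q * (1-q)⁻¹) := by
  have hgeo := aux_hgeo q hq0 hq1
  have hs2' : Summable (fun n : ℕ => (if (-((n:ℤ)+1)) = 0 then (0:ℝ) else q ^ (-((n:ℤ)+1)).natAbs)) := by
    rw [aux_eq_neg]; exact hgeo.summable
  have key := tsum_of_nat_of_neg_add_one (f := fun n : ℤ => if n = 0 then (0:ℝ) else q ^ n.natAbs)
    (aux_summable_nat q hq0 hq1) hs2'
  rw [key]
  have h1 : ∑' n : ℕ, (if (n:ℤ) = 0 then (0:ℝ) else q ^ (n:ℤ).natAbs) = q * (1-q)⁻¹ := by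
    rw [Summable.tsum_eq_zero_add (aux_summable_nat q hq0 hq1)]
    norm_num
    rw [← hgeo.tsum_eq]
    apply tsum_congr
    intro n
    rw [if_neg (by omega : ((n:ℤ)+1) ≠ 0),
      show ((n:ℤ)+1).natAbs = n + 1 from by omega]
  have h2 : ∑' n : ℕ, (if (-((n:ℤ)+1)) = 0 then (0:ℝ) else q ^ (-((n:ℤ)+1)).natAbs) = q * (1-q)⁻¹ := by
    rw [aux_eq_neg, hgeo.tsum_eq]
  rw [h1, h2]
  ring

lemma norm_theta2_sub_one_le (x : ℝ) {τ : ℂ} (hτ : 0 < im τ) :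
    ‖jacobiTheta₂ x τ - 1‖ ≤ 2 * (rexp (-π * τ.im) * (1 - rexp (-π * τ.im))⁻¹) := by
  obtain ⟨q, hq⟩ : ∃ q : ℝ, q = rexp (-π * τ.im) := ⟨_, rfl⟩
  rw [← hq]
  have hq0 : 0 < q := hq ▸ Real.exp_pos _
  have hq1 : q < 1 := by
    rw [hq, Real.exp_lt_one_iff]
    exact mul_neg_of_neg_of_pos (neg_lt_zero.mpr Real.pi_pos) hτ
  have h0 : HasSum (fun n : ℤ => jacobiTheta₂_term n x τ - (if n = 0 then 1 else 0))
      (jacobiTheta₂ x τ - 1) :=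
    (hasSum_jacobiTheta₂_term x hτ).sub (hasSum_ite_eq 0 1)
  have hb : ∀ n : ℤ, ‖jacobiTheta₂_term n x τ - (if n = 0 then 1 else 0)‖ ≤
      (if n = 0 then 0 else q ^ n.natAbs) := by
    intro n
    rcases eq_or_ne n 0 with rfl | hn
    · simp [jacobiTheta₂_term]
    · simp only [hn, if_neg, if_false]
      rw [sub_zero, norm_jacobiTheta₂_term]
      have him : (x:ℂ).im = 0 := by simp
      rw [him]
      have hqq : q ^ n.natAbs = rexp (-π * n.natAbs * τ.im) := by
        rw [hq, ← Real.exp_nat_mul]; ring_nf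
      rw [hqq, Real.exp_le_exp]
      have h2 : ((n.natAbs : ℝ))^2 = (n:ℝ)^2 := by
        rw [Nat.cast_natAbs]
        push_cast
        exact sq_abs _
      have h1 : (n.natAbs : ℝ) ≤ (n:ℝ)^2 := by
        have hge : (1:ℝ) ≤ (n.natAbs : ℝ) := by
          exact_mod_cast Nat.one_le_iff_ne_zero.mpr (Int.natAbs_ne_zero.mpr hn)
        nlinarith
      ring_nf
      nlinarith [Real.pi_pos, hτ, mul_le_mul_of_nonneg_right h1 (mul_pos Real.pi_pos hτ).le]
  have hsummable := aux_summable_int q hq0 hq1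
  have hnorm_summable : Summable (fun n : ℤ => ‖jacobiTheta₂_term n x τ - (if n = 0 then 1 else 0)‖) :=
    Summable.of_nonneg_of_le (fun n => norm_nonneg _) hb hsummable
  calc ‖jacobiTheta₂ x τ - 1‖ = ‖∑' n : ℤ, (jacobiTheta₂_term n x τ - (if n = 0 then 1 else 0))‖ := by
        rw [h0.tsum_eq]
    _ ≤ ∑' n : ℤ, ‖jacobiTheta₂_term n x τ - (if n = 0 then 1 else 0)‖ :=
        norm_tsum_le_tsum_norm hnorm_summable
    _ ≤ ∑' n : ℤ, (if n = 0 then (0:ℝ) else q ^ n.natAbs) := Summable.tsum_mono hnorm_summable hsummable hb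
    _ = 2 * (q * (1-q)⁻¹) := aux_tsum_int q hq0 hq1

lemma tendsto_theta2_one (x s : ℝ) :
    Tendsto (fun T : ℝ => jacobiTheta₂ x (s + I * T)) atTop (𝓝 1) := by
  rw [tendsto_iff_norm_sub_tendsto_zero]
  have hg : Tendsto (fun T : ℝ => 2 * (rexp (-π * T) * (1 - rexp (-π))⁻¹)) atTop (𝓝 0) := by
    have h1 : Tendsto (fun T : ℝ => -π * T) atTop atBot :=
      tendsto_id.const_mul_atTop_of_neg (neg_lt_zero.mpr Real.pi_pos)
    have h2 : Tendsto (fun T : ℝ => rexp (-π * T)) atTop (𝓝 0) :=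
      Real.tendsto_exp_atBot.comp h1
    have := (h2.mul_const ((1 - rexp (-π))⁻¹)).const_mul (2:ℝ)
    simpa using this
  apply squeeze_zero' (Eventually.of_forall fun T => norm_nonneg _) ?_ hg
  filter_upwards [eventually_ge_atTop (1:ℝ)] with T hT
  have him : (s + I * T : ℂ).im = T := by simp
  have hT0 : (0:ℝ) < T := lt_of_lt_of_le one_pos hT
  have hτ : 0 < (s + I * T : ℂ).im := by rw [him]; exact hT0
  refine (norm_theta2_sub_one_le x hτ).trans ?_
  rw [him]
  have e1 : rexp (-π * T) ≤ rexp (-π) := by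
    rw [Real.exp_le_exp]
    nlinarith [Real.pi_pos]
  have e2 : (0:ℝ) < 1 - rexp (-π) := by
    have : rexp (-π) < 1 := by
      rw [Real.exp_lt_one_iff]; linarith [Real.pi_pos]
    linarith
  have e3 : (0:ℝ) < 1 - rexp (-π * T) := by
    have : rexp (-π * T) < 1 := by
      rw [Real.exp_lt_one_iff]; nlinarith [Real.pi_pos]
    linarith
  have : (1 - rexp (-π * T))⁻¹ ≤ (1 - rexp (-π))⁻¹ := by
    apply inv_anti₀ e2
    linarith
  have h0 : 0 ≤ rexp (-π * T) := (Real.exp_pos _).le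
  nlinarith [mul_le_mul e1 this (inv_nonneg.mpr e3.le) (Real.exp_pos (-π)).le]


lemma half_mul_half {z : ℂ} (hz : z ≠ 0) : z ^ ((1:ℂ)/2) * z ^ ((1:ℂ)/2) = z := by
  rw [← Complex.cpow_add _ _ hz]
  norm_num

lemma inv_half_pow_mem {z : ℂ} (h1 : 0 < z.re) (h2 : z.im < 0) :
    0 < ((z ^ ((1:ℂ)/2))⁻¹).im ∧ ((z ^ ((1:ℂ)/2))⁻¹).im < ((z ^ ((1:ℂ)/2))⁻¹).re := by
  have hz : z ≠ 0 := by intro h; rw [h] at h1; simp at h1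
  have key : (z ^ ((1:ℂ)/2))⁻¹ = cexp (Complex.log z * (-(1/2))) := by
    rw [← Complex.cpow_neg, Complex.cpow_def_of_ne_zero hz]
  have harg1 : z.arg < 0 := Complex.arg_neg_iff.mpr h2
  have harg2 : -(π/2) < z.arg := by
    have := Complex.abs_arg_lt_pi_div_two_iff.mpr (Or.inl h1)
    rw [abs_lt] at this
    exact this.1
  -- the exponent
  have hre : (Complex.log z * (-(1/2))).re = -(Real.log (‖z‖))/2 := by
    simp [Complex.mul_re, Complex.log_re, Complex.log_im]
    ring
  have him : (Complex.log z * (-(1/2))).im = -z.arg/2 := by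
    simp [Complex.mul_im, Complex.log_re, Complex.log_im]
    ring
  set θ : ℝ := -z.arg/2 with hθ
  have hθ1 : 0 < θ := by rw [hθ]; linarith
  have hθ2 : θ < π/4 := by rw [hθ]; linarith
  have hsin : 0 < Real.sin θ := Real.sin_pos_of_pos_of_lt_pi hθ1
    (by linarith [Real.pi_pos])
  have hcos : Real.sin θ < Real.cos θ := by
    rw [← Real.sin_pi_div_two_sub]
    apply Real.strictMonoOn_sin
    · constructor <;> [linarith [Real.pi_pos]; linarith [Real.pi_pos]]
    · constructor <;> [linarith [Real.pi_pos]; linarith [Real.pi_pos]]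
    · linarith
  rw [key, Complex.exp_im, Complex.exp_re, hre, him]
  have hexp : 0 < rexp (-(Real.log (‖z‖))/2) := Real.exp_pos _
  constructor
  · exact mul_pos hexp hsin
  · have := mul_lt_mul_of_pos_left hcos hexp
    linarith
lemma re_pos_prod {x y : ℂ} (hx1 : 0 < x.im) (hx2 : x.im < x.re) (hy1 : 0 < y.im)
    (hy2 : y.im < y.re) : 0 < (x*y).re := by
  rw [Complex.mul_re]
  nlinarith

lemma eq_of_sq {A B : ℂ} (h : A*A = B*B) (hA : 0 < A.re) (hB : 0 < B.re) : A = B := by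
  rcases mul_self_eq_mul_self_iff.mp h with h' | h'
  · exact h'
  · exfalso
    have : A.re = -B.re := by rw [h']; simp
    linarith


lemma field_aux (c t : ℂ) (hc : c ≠ 0) (ht : t ≠ 0) (hτ : c⁻¹ + I*t ≠ 0) :
    c^2*t * (1/(-I*(c⁻¹+I*t))) * (1/(-I*(-1/(c⁻¹+I*t)+c))) = I*c := by
  have key : (1:ℂ) + I*t*c = c*(c⁻¹+I*t) := by field_simp
  have hkey : (1:ℂ) + I*t*c ≠ 0 := key ▸ mul_ne_zero hc hτ
  have hτw : (c⁻¹+I*t)*(-1/(c⁻¹+I*t)+c) = I*t*c := by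
    rw [mul_add, mul_div_assoc', mul_neg_one, neg_div, div_self hτ, add_mul, inv_mul_cancel₀ hc]
    ring
  have h1 : (-I*(c⁻¹+I*t)) * (-I*(-1/(c⁻¹+I*t)+c)) = -(I*t*c) := by
    calc (-I*(c⁻¹+I*t)) * (-I*(-1/(c⁻¹+I*t)+c)) = (I*I) * ((c⁻¹+I*t)*(-1/(c⁻¹+I*t)+c)) := by ring
      _ = -(I*t*c) := by rw [I_mul_I, hτw]; ring
  have hne : -(I*t*c) ≠ 0 := by simp [I_ne_zero, ht, hc]
  have h2 : c^2*t * (1/(-I*(c⁻¹+I*t))) * (1/(-I*(-1/(c⁻¹+I*t)+c))) =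
      c^2*t * ((-I*(c⁻¹+I*t)) * (-I*(-1/(c⁻¹+I*t)+c)))⁻¹ := by
    rw [mul_inv, one_div, one_div]; ring
  rw [h2, h1, ← div_eq_mul_inv, div_eq_iff hne]
  linear_combination (c^2*t) * Complex.I_sq

lemma exp_quarter : cexp ((π:ℂ) * I / 4) = ↑(Real.cos (π/4)) + ↑(Real.sin (π/4)) * I := by
  rw [show (π:ℂ) * I / 4 = (↑(π/4:ℝ)) * I by push_cast; ring, Complex.exp_mul_I,
    ← Complex.ofReal_cos, ← Complex.ofReal_sin]

lemma exp_quarter_sq : cexp ((π:ℂ) * I / 4) * cexp ((π:ℂ) * I / 4) = I := by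
  rw [← Complex.exp_add, show (π:ℂ)*I/4 + (π:ℂ)*I/4 = (↑(π/2:ℝ))*I by push_cast; ring,
    Complex.exp_mul_I, ← Complex.ofReal_cos, ← Complex.ofReal_sin,
    Real.cos_pi_div_two, Real.sin_pi_div_two]
  simp

lemma B_re_pos (D : ℕ) (hD : 0 < D) : 0 < ((Real.sqrt D : ℂ) * cexp ((π:ℂ) * I / 4)).re := by
  rw [Complex.re_ofReal_mul, exp_quarter]
  have h1 : 0 < Real.sqrt D := Real.sqrt_pos.mpr (by exact_mod_cast hD)
  apply mul_pos h1
  have : (↑(Real.cos (π/4)) + ↑(Real.sin (π/4)) * I : ℂ).re = Real.cos (π/4) := by simp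
  rw [this, Real.cos_pi_div_four]
  positivity

lemma B_sq (D : ℕ) : ((Real.sqrt D : ℂ) * cexp ((π:ℂ) * I / 4)) *
    ((Real.sqrt D : ℂ) * cexp ((π:ℂ) * I / 4)) = I * D := by
  have h1 : (Real.sqrt D : ℂ) * (Real.sqrt D : ℂ) = (D:ℂ) := by
    rw [← Complex.ofReal_mul, Real.mul_self_sqrt (Nat.cast_nonneg D)]
    push_cast; ring
  calc ((Real.sqrt D : ℂ) * cexp ((π:ℂ) * I / 4)) * ((Real.sqrt D : ℂ) * cexp ((π:ℂ) * I / 4))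
      = ((Real.sqrt D : ℂ) * (Real.sqrt D : ℂ)) * (cexp ((π:ℂ) * I / 4) * cexp ((π:ℂ) * I / 4)) := by ring
    _ = (D:ℂ) * I := by rw [h1, exp_quarter_sq]
    _ = I * D := by ring

lemma scalar_eq (D : ℕ) (hD : 0 < D) (t : ℝ) (ht : 0 < t) :
    (↑(((D:ℝ))^2*t) : ℂ) ^ ((1:ℂ)/2) *
      (1/(-I*((↑(((D:ℝ))⁻¹) : ℂ) + I*(t:ℝ))) ^ ((1:ℂ)/2)) *
      (1/(-I*(-1/((↑(((D:ℝ))⁻¹) : ℂ) + I*(t:ℝ)) + (D:ℂ))) ^ ((1:ℂ)/2)) =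
    (Real.sqrt D : ℂ) * cexp ((π:ℂ) * I / 4) := by
  have hd0 : (0:ℝ) < (D:ℝ) := by exact_mod_cast hD
  set τ : ℂ := (↑(((D:ℝ))⁻¹) : ℂ) + I*(t:ℝ) with hτdef
  set w : ℂ := -1/τ + (D:ℂ) with hwdef
  have hτre : τ.re = ((D:ℝ))⁻¹ := by simp [hτdef]
  have hτim : τ.im = t := by simp [hτdef]
  have hτ0 : τ ≠ 0 := fun h => by rw [h] at hτim; simp at hτim; linarith [ht, hτim]
  have hnormSq : 0 < Complex.normSq τ := Complex.normSq_pos.mpr hτ0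
  have hneg : (-1/τ : ℂ) = -(τ⁻¹) := by rw [neg_div, one_div]
  have hwim : w.im = t / Complex.normSq τ := by
    rw [hwdef, hneg]
    simp [Complex.add_im, Complex.neg_im, Complex.inv_im, hτim]
    field_simp
  have hwim0 : 0 < w.im := by rw [hwim]; positivity
  have hwre : w.re = (D:ℝ) - ((D:ℝ))⁻¹ / Complex.normSq τ := by
    rw [hwdef, hneg]
    simp [Complex.add_re, Complex.neg_re, Complex.inv_re, hτre]
    ring
  have hnormSq_eq : Complex.normSq τ = ((D:ℝ))⁻¹^2 + t^2 := by
    rw [Complex.normSq_apply, hτre, hτim]; ring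
  have hwre0 : 0 < w.re := by
    rw [hwre, hnormSq_eq, sub_pos, div_lt_iff₀ (by positivity)]
    have h2 : (D:ℝ) * (((D:ℝ))⁻¹^2 + t^2) = ((D:ℝ))⁻¹ + (D:ℝ)*t^2 := by field_simp
    rw [h2]
    have : 0 < (D:ℝ)*t^2 := by positivity
    linarith
  have hw0 : w ≠ 0 := fun h => by rw [h] at hwim0; simp at hwim0
  have hx_re : (-I*τ).re = t := by simp [Complex.mul_re, hτim]
  have hx_im : (-I*τ).im = -((D:ℝ))⁻¹ := by simp [Complex.mul_im, hτre]
  have hy_re : (-I*w).re = w.im := by simp [Complex.mul_re]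
  have hy_im : (-I*w).im = -w.re := by simp [Complex.mul_im]
  have hx0 : (-I*τ) ≠ 0 := fun h => by rw [h] at hx_re; simp at hx_re; linarith [ht, hx_re]
  have hy0 : (-I*w) ≠ 0 := fun h => by rw [h] at hy_re; rw [Complex.zero_re] at hy_re; linarith [hwim0]
  have hu0 : (↑(((D:ℝ))^2*t) : ℂ) ≠ 0 := by
    rw [Complex.ofReal_ne_zero]; positivity
  have hAA : ((↑(((D:ℝ))^2*t) : ℂ) ^ ((1:ℂ)/2) * (1/(-I*τ) ^ ((1:ℂ)/2)) * (1/(-I*w) ^ ((1:ℂ)/2))) *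
      ((↑(((D:ℝ))^2*t) : ℂ) ^ ((1:ℂ)/2) * (1/(-I*τ) ^ ((1:ℂ)/2)) * (1/(-I*w) ^ ((1:ℂ)/2))) = I * D := by
    have e1 := half_mul_half hu0
    have e2 := half_mul_half hx0
    have e3 := half_mul_half hy0
    calc ((↑(((D:ℝ))^2*t) : ℂ) ^ ((1:ℂ)/2) * (1/(-I*τ) ^ ((1:ℂ)/2)) * (1/(-I*w) ^ ((1:ℂ)/2))) *
      ((↑(((D:ℝ))^2*t) : ℂ) ^ ((1:ℂ)/2) * (1/(-I*τ) ^ ((1:ℂ)/2)) * (1/(-I*w) ^ ((1:ℂ)/2)))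
        = ((↑(((D:ℝ))^2*t) : ℂ) ^ ((1:ℂ)/2) * (↑(((D:ℝ))^2*t) : ℂ) ^ ((1:ℂ)/2)) *
          (1/((-I*τ) ^ ((1:ℂ)/2) * (-I*τ) ^ ((1:ℂ)/2))) *
          (1/((-I*w) ^ ((1:ℂ)/2) * (-I*w) ^ ((1:ℂ)/2))) := by ring
      _ = (↑(((D:ℝ))^2*t) : ℂ) * (1/(-I*τ)) * (1/(-I*w)) := by rw [e1, e2, e3]
      _ = I * D := by
          have hDc : (D:ℂ) ≠ 0 := Nat.cast_ne_zero.mpr hD.ne'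
          have htc : (t:ℂ) ≠ 0 := Complex.ofReal_ne_zero.mpr ht.ne'
          have hτc : ((D:ℂ))⁻¹ + I*(t:ℂ) ≠ 0 := by
            have : ((D:ℂ))⁻¹ + I*(t:ℂ) = τ := by rw [hτdef]; push_cast; ring
            rw [this]; exact hτ0
          have goal_eq : (↑(((D:ℝ))^2*t) : ℂ) * (1/(-I*τ)) * (1/(-I*w)) =
              (D:ℂ)^2*(t:ℂ) * (1/(-I*(((D:ℂ))⁻¹+I*(t:ℂ)))) *
              (1/(-I*(-1/(((D:ℂ))⁻¹+I*(t:ℂ))+(D:ℂ)))) := by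
            rw [hwdef, hτdef]; push_cast; ring
          rw [goal_eq]
          exact field_aux (D:ℂ) (t:ℂ) hDc htc hτc
  have hxmem := inv_half_pow_mem (z := -I*τ) (by rw [hx_re]; exact ht)
    (by rw [hx_im]; simp; positivity)
  have hymem := inv_half_pow_mem (z := -I*w) (by rw [hy_re]; exact hwim0)
    (by rw [hy_im]; simpa using hwre0)
  have hprod := re_pos_prod hxmem.1 hxmem.2 hymem.1 hymem.2
  have hA_re : 0 < ((↑(((D:ℝ))^2*t) : ℂ) ^ ((1:ℂ)/2) * (1/(-I*τ) ^ ((1:ℂ)/2)) * (1/(-I*w) ^ ((1:ℂ)/2))).re := by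
    have hs : (↑(((D:ℝ))^2*t) : ℂ) ^ ((1:ℂ)/2) = ↑((((D:ℝ))^2*t) ^ ((1:ℝ)/2)) := by
      rw [Complex.ofReal_cpow (by positivity)]
      norm_num
    have hre : (↑(((D:ℝ))^2*t) : ℂ) ^ ((1:ℂ)/2) * (1/(-I*τ) ^ ((1:ℂ)/2)) * (1/(-I*w) ^ ((1:ℂ)/2)) =
        ↑((((D:ℝ))^2*t) ^ ((1:ℝ)/2)) * (((-I*τ) ^ ((1:ℂ)/2))⁻¹ * ((-I*w) ^ ((1:ℂ)/2))⁻¹) := by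
      rw [hs, one_div, one_div]; ring
    rw [hre, Complex.re_ofReal_mul]
    exact mul_pos (Real.rpow_pos_of_pos (by positivity) _) hprod
  exact eq_of_sq (by rw [hAA, B_sq D]) hA_re (B_re_pos D hD)


lemma theta_period (z σ : ℂ) (m : ℕ) : jacobiTheta₂ z (σ + 2*(m:ℂ)) = jacobiTheta₂ z σ := by
  induction m with
  | zero => simp
  | succ n ih =>
    have e : σ + 2*((n+1:ℕ):ℂ) = (σ + 2*(n:ℂ)) + 2 := by push_cast; ring
    rw [e, jacobiTheta₂_add_right, ih]

lemma key_identity (D : ℕ) (hD : 0 < D) (hEven : Even D) (t : ℝ) (ht : 0 < t) :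
    ∑ r ∈ Finset.range D, cexp (π * I * (r:ℂ)^2 / (D:ℂ)) *
      jacobiTheta₂ (↑((r:ℝ)/(D:ℝ))) (I * ↑((((D:ℝ))^2*t)⁻¹)) =
    ((Real.sqrt D : ℂ) * cexp ((π:ℂ) * I / 4)) *
      jacobiTheta₂ 0 ((↑(-((D:ℝ))⁻¹) : ℂ) + I * ↑((((D:ℝ))^2*t)⁻¹)) := by
  haveI : NeZero D := ⟨hD.ne'⟩
  obtain ⟨h, hDh⟩ := hEven
  have hDR : (0:ℝ) < (D:ℝ) := Nat.cast_pos.mpr hD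
  have hDc : (D:ℂ) ≠ 0 := Nat.cast_ne_zero.mpr hD.ne'
  have htc : (t:ℂ) ≠ 0 := Complex.ofReal_ne_zero.mpr ht.ne'
  set τ : ℂ := (↑(((D:ℝ))⁻¹) : ℂ) + I*(t:ℝ) with hτdef
  have hτim : τ.im = t := by simp [hτdef]
  have hτpos : 0 < τ.im := by rw [hτim]; exact ht
  have hτ0 : τ ≠ 0 := fun hzero => by rw [hzero] at hτim; simp at hτim; linarith
  set u : ℝ := ((D:ℝ))^2*t with hudef
  have hu_pos : 0 < u := by positivity
  have huc : (u:ℂ) ≠ 0 := Complex.ofReal_ne_zero.mpr hu_pos.ne'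
  set σ : ℂ := I * (u:ℂ) with hσdef
  have hσim : σ.im = u := by simp [hσdef]
  have hσpos : 0 < σ.im := by rw [hσim]; exact hu_pos
  have hσ0 : σ ≠ 0 := fun hzero => by rw [hzero] at hσim; simp at hσim; linarith
  have hmiσ : -I * σ = (u:ℂ) := by
    rw [hσdef]
    calc -I * (I * (u:ℂ)) = -(I*I) * (u:ℂ) := by ring
      _ = (u:ℂ) := by rw [I_mul_I]; ring
  have hinvσ : -1/σ = I * (↑(u⁻¹):ℂ) := by
    rw [hσdef, div_eq_iff hσ0]
    push_cast
    rw [show I * (↑u)⁻¹ * (I * ↑u) = (I*I) * ((↑u)⁻¹ * ↑u) by ring, I_mul_I,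
      inv_mul_cancel₀ huc]
    ring
  -- the global sum
  set F : ℤ → ℂ := fun n => cexp (π * I * (n:ℂ)^2 * τ) with hFdef
  have h0 : HasSum F (jacobiTheta₂ 0 τ) := by
    have := hasSum_jacobiTheta₂_term 0 hτpos
    simp only [jacobiTheta₂_term, mul_zero, zero_add] at this
    exact this
  set e : Fin D × ℤ ≃ ℤ := (Equiv.prodComm (Fin D) ℤ).trans (Int.divModEquiv D).symm with hedef
  have h1 : HasSum (F ∘ e) (jacobiTheta₂ 0 τ) := e.hasSum_iff.mpr h0
  -- per-residue sums
  set g : ℕ → ℂ := fun r => cexp (π * I * (r:ℂ)^2 / (D:ℂ)) *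
      ((1/(u:ℂ)^((1:ℂ)/2)) * jacobiTheta₂ (↑((r:ℝ)/(D:ℝ))) (I * ↑(u⁻¹))) with hgdef
  have h2 : ∀ r : ℕ, HasSum (fun q : ℤ => F (q * (D:ℤ) + (r:ℤ))) (g r) := by
    intro r
    set a : ℂ := (↑((r:ℝ)/(D:ℝ)) : ℂ) with hadef
    have hs := hasSum_jacobiTheta₂_term (a*σ) hσpos
    have hs' := hs.mul_left (cexp (π * I * (r:ℂ)^2 / (D:ℂ)) * cexp (π*I*a^2*σ))
    have hpt : ∀ q : ℤ, (cexp (π * I * (r:ℂ)^2 / (D:ℂ)) * cexp (π*I*a^2*σ)) *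
        jacobiTheta₂_term q (a*σ) σ = F (q * (D:ℤ) + (r:ℤ)) := by
      intro q
      rw [jacobiTheta₂_term, hFdef]
      have exp_eq : π*I*(((q*(D:ℤ)+(r:ℤ)) : ℤ):ℂ)^2*τ =
          (π*I*(r:ℂ)^2/(D:ℂ) + (π*I*a^2*σ + (2*π*I*(q:ℂ)*(a*σ) + π*I*(q:ℂ)^2*σ))) +
          ((q^2*(h:ℤ) + q*(r:ℤ) : ℤ):ℂ)*(2*π*I) := by
        rw [hadef, hσdef, hτdef, hudef]
        push_cast
        field_simp
        subst hDh
        push_cast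
        ring
      show _ = cexp (π*I*(((q*(D:ℤ)+(r:ℤ)) : ℤ):ℂ)^2*τ)
      rw [← Complex.exp_add, ← Complex.exp_add]
      conv_rhs => rw [exp_eq, Complex.exp_add, Complex.exp_int_mul_two_pi_mul_I]
      rw [mul_one]
      congr 1
      ring
    have hs'' : HasSum (fun q : ℤ => F (q * (D:ℤ) + (r:ℤ)))
        ((cexp (π * I * (r:ℂ)^2 / (D:ℂ)) * cexp (π*I*a^2*σ)) * jacobiTheta₂ (a*σ) σ) := by
      refine HasSum.congr_fun hs' ?_
      intro q
      exact (hpt q).symm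
    -- now rewrite the value using the functional equation
    have FE := jacobiTheta₂_functional_equation (a*σ) σ
    have hcancel : -↑π * I * (a*σ)^2 / σ = -(π*I*a^2*σ) := by
      field_simp
    have hdiv : a*σ/σ = a := mul_div_cancel_right₀ a hσ0
    have hmid : cexp (π*I*a^2*σ) * (1/(u:ℂ)^((1:ℂ)/2) * cexp (-(π*I*a^2*σ)) *
        jacobiTheta₂ a (I*(↑(u⁻¹):ℂ))) =
        1/(u:ℂ)^((1:ℂ)/2) * jacobiTheta₂ a (I*(↑(u⁻¹):ℂ)) := by
      rw [show cexp (π*I*a^2*σ) * (1/(u:ℂ)^((1:ℂ)/2) * cexp (-(π*I*a^2*σ)) *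
        jacobiTheta₂ a (I*(↑(u⁻¹):ℂ))) = (cexp (π*I*a^2*σ) * cexp (-(π*I*a^2*σ))) *
        (1/(u:ℂ)^((1:ℂ)/2) * jacobiTheta₂ a (I*(↑(u⁻¹):ℂ))) from by ring,
        ← Complex.exp_add]
      simp
    have hval : (cexp (π * I * (r:ℂ)^2 / (D:ℂ)) * cexp (π*I*a^2*σ)) * jacobiTheta₂ (a*σ) σ = g r := by
      calc (cexp (π * I * (r:ℂ)^2 / (D:ℂ)) * cexp (π*I*a^2*σ)) * jacobiTheta₂ (a*σ) σ
          = cexp (π * I * (r:ℂ)^2 / (D:ℂ)) * (cexp (π*I*a^2*σ) *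
            (1/(u:ℂ)^((1:ℂ)/2) * cexp (-(π*I*a^2*σ)) * jacobiTheta₂ a (I*(↑(u⁻¹):ℂ)))) := by
            rw [FE, hcancel, hdiv, hmiσ, hinvσ]
            ring
        _ = cexp (π * I * (r:ℂ)^2 / (D:ℂ)) *
            (1/(u:ℂ)^((1:ℂ)/2) * jacobiTheta₂ a (I*(↑(u⁻¹):ℂ))) := by rw [hmid]
        _ = g r := by simp only [hgdef, hadef]
    exact hval ▸ hs''
  have h2' : ∀ b : Fin D, HasSum (fun q : ℤ => (F ∘ e) (b, q)) (g b.val) := by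
    intro b
    have hfe : (fun q : ℤ => (F ∘ e) (b, q)) = (fun q : ℤ => F (q * (D:ℤ) + (b.val:ℤ))) := by
      funext q
      simp [hedef, Int.divModEquiv]
    rw [hfe]
    exact h2 b.val
  have hfin : HasSum (fun b : Fin D => g b.val) (jacobiTheta₂ 0 τ) := h1.prod_fiberwise h2'
  have eqA : jacobiTheta₂ 0 τ = ∑ r ∈ Finset.range D, g r := by
    rw [← Fin.sum_univ_eq_sum_range]
    exact hfin.unique (hasSum_fintype _)
  -- right side: functional equation chain
  set w : ℂ := -1/τ + (D:ℂ) with hwdef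
  have hwim : 0 < w.im := by
    have hns := Complex.normSq_pos.mpr hτ0
    rw [hwdef, neg_div, one_div]
    simp only [Complex.add_im, Complex.neg_im, Complex.inv_im, Complex.natCast_im, add_zero]
    rw [hτim]
    simpa using div_neg_of_neg_of_pos (neg_lt_zero.mpr ht) hns
  have hw0 : w ≠ 0 := fun hzero => by rw [hzero] at hwim; simp at hwim
  have FE1 := jacobiTheta₂_functional_equation 0 τ
  have FE1' : jacobiTheta₂ 0 τ = 1/(-I*τ)^((1:ℂ)/2) * jacobiTheta₂ 0 (-1/τ) := by
    rw [FE1]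
    norm_num
  have hper : jacobiTheta₂ 0 w = jacobiTheta₂ 0 (-1/τ) := by
    rw [hwdef, show (D:ℂ) = 2*((h:ℕ):ℂ) by rw [hDh]; push_cast; ring]
    exact theta_period 0 (-1/τ) h
  have FE2 := jacobiTheta₂_functional_equation 0 w
  have FE2' : jacobiTheta₂ 0 w = 1/(-I*w)^((1:ℂ)/2) *
      jacobiTheta₂ 0 ((↑(-((D:ℝ))⁻¹) : ℂ) + I * ↑(u⁻¹)) := by
    rw [FE2]
    have hτ0' : ((D:ℂ))⁻¹ + I*(t:ℂ) ≠ 0 := by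
      have e1 : ((D:ℂ))⁻¹ + I*(t:ℂ) = τ := by rw [hτdef]; push_cast; ring
      rw [e1]; exact hτ0
    have hkey : (1:ℂ) + I*(t:ℂ)*(D:ℂ) ≠ 0 := by
      have e1 : (1:ℂ) + I*(t:ℂ)*(D:ℂ) = (D:ℂ)*(((D:ℂ))⁻¹ + I*(t:ℂ)) := by field_simp
      rw [e1]
      exact mul_ne_zero hDc hτ0'
    have hmul : ((↑(-((D:ℝ))⁻¹) : ℂ) + I*(↑(u⁻¹):ℂ)) * w = -1 := by
      rw [hwdef, hτdef, hudef]
      push_cast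
      field_simp [hkey]
      ring_nf
      have hkey2 : ((D:ℂ)^3*(t:ℂ) + (D:ℂ)^4*(t:ℂ)^2*I) ≠ 0 := by
        have e1 : ((D:ℂ)^3*(t:ℂ) + (D:ℂ)^4*(t:ℂ)^2*I) = (D:ℂ)^3*(t:ℂ)*(1+I*(t:ℂ)*(D:ℂ)) := by ring
        rw [e1]
        exact mul_ne_zero (mul_ne_zero (pow_ne_zero 3 hDc) htc) hkey
      have hk1 : (1:ℂ) + (D:ℂ)*(t:ℂ)*I ≠ 0 := by
        rw [show (1:ℂ) + (D:ℂ)*(t:ℂ)*I = 1 + I*(t:ℂ)*(D:ℂ) by ring]; exact hkey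
      linear_combination (-I) * mul_inv_cancel₀ hk1 +
        ((D:ℂ)*(t:ℂ)*(1 + (D:ℂ)*(t:ℂ)*I)⁻¹) * Complex.I_sq
    have hinv_w : -1/w = (↑(-((D:ℝ))⁻¹) : ℂ) + I * ↑(u⁻¹) := by
      calc -1/w = (((↑(-((D:ℝ))⁻¹) : ℂ) + I*(↑(u⁻¹):ℂ)) * w)/w := by rw [hmul]
        _ = (↑(-((D:ℝ))⁻¹) : ℂ) + I * ↑(u⁻¹) := mul_div_cancel_right₀ _ hw0
    rw [hinv_w]
    norm_num
  -- combine
  have hu_half_ne : (u:ℂ)^((1:ℂ)/2) ≠ 0 := by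
    intro hzero
    rw [Complex.cpow_eq_zero_iff] at hzero
    exact huc hzero.1
  have eqA' : ∑ r ∈ Finset.range D, cexp (π * I * (r:ℂ)^2 / (D:ℂ)) *
      jacobiTheta₂ (↑((r:ℝ)/(D:ℝ))) (I * ↑(u⁻¹)) = (u:ℂ)^((1:ℂ)/2) * jacobiTheta₂ 0 τ := by
    rw [eqA, Finset.mul_sum]
    apply Finset.sum_congr rfl
    intro r _
    rw [hgdef]
    have e1 : (u:ℂ)^((1:ℂ)/2) * (cexp (π * I * (r:ℂ)^2 / (D:ℂ)) *
        (1/(u:ℂ)^((1:ℂ)/2) * jacobiTheta₂ (↑((r:ℝ)/(D:ℝ))) (I * ↑(u⁻¹)))) =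
        ((u:ℂ)^((1:ℂ)/2) * (1/(u:ℂ)^((1:ℂ)/2))) *
        (cexp (π * I * (r:ℂ)^2 / (D:ℂ)) * jacobiTheta₂ (↑((r:ℝ)/(D:ℝ))) (I * ↑(u⁻¹))) := by
      ring
    rw [e1, mul_one_div_cancel hu_half_ne, one_mul]
  calc ∑ r ∈ Finset.range D, cexp (π * I * (r:ℂ)^2 / (D:ℂ)) *
      jacobiTheta₂ (↑((r:ℝ)/(D:ℝ))) (I * ↑(u⁻¹))
      = (u:ℂ)^((1:ℂ)/2) * jacobiTheta₂ 0 τ := eqA'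
    _ = (u:ℂ)^((1:ℂ)/2) * (1/(-I*τ)^((1:ℂ)/2) * (1/(-I*w)^((1:ℂ)/2) *
        jacobiTheta₂ 0 ((↑(-((D:ℝ))⁻¹) : ℂ) + I * ↑(u⁻¹)))) := by
      rw [FE1', ← hper, FE2']
    _ = ((u:ℂ)^((1:ℂ)/2) * (1/(-I*τ)^((1:ℂ)/2)) * (1/(-I*w)^((1:ℂ)/2))) *
        jacobiTheta₂ 0 ((↑(-((D:ℝ))⁻¹) : ℂ) + I * ↑(u⁻¹)) := by ring
    _ = ((Real.sqrt D : ℂ) * cexp ((π:ℂ) * I / 4)) *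
        jacobiTheta₂ 0 ((↑(-((D:ℝ))⁻¹) : ℂ) + I * ↑(u⁻¹)) := by
      rw [hudef, hτdef, hwdef]
      rw [scalar_eq D hD t ht]


lemma gauss_core (D : ℕ) (hD : 0 < D) (hEven : Even D) :
    ∑ r ∈ Finset.range D, cexp (π * I * (r:ℂ)^2 / (D:ℂ)) =
      (Real.sqrt D : ℂ) * cexp ((π:ℂ)*I/4) := by
  have hDR : (0:ℝ) < (D:ℝ) := Nat.cast_pos.mpr hD
  have hT : Tendsto (fun t : ℝ => ((((D:ℝ))^2*t)⁻¹)) (𝓝[>] (0:ℝ)) atTop := by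
    have h1 : Tendsto (fun t : ℝ => ((((D:ℝ))^2)⁻¹ * t⁻¹)) (𝓝[>] (0:ℝ)) atTop :=
      tendsto_inv_nhdsGT_zero.const_mul_atTop (by positivity)
    exact h1.congr (fun t => by rw [← mul_inv])
  have hl : Tendsto (fun t : ℝ => ∑ r ∈ Finset.range D, cexp (π*I*(r:ℂ)^2/(D:ℂ)) *
      jacobiTheta₂ (↑((r:ℝ)/(D:ℝ))) (I * ↑((((D:ℝ))^2*t)⁻¹))) (𝓝[>] (0:ℝ))
      (𝓝 (∑ r ∈ Finset.range D, cexp (π*I*(r:ℂ)^2/(D:ℂ)))) := by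
    have htot : ∀ r ∈ Finset.range D, Tendsto (fun t : ℝ => cexp (π*I*(r:ℂ)^2/(D:ℂ)) *
        jacobiTheta₂ (↑((r:ℝ)/(D:ℝ))) (I * ↑((((D:ℝ))^2*t)⁻¹))) (𝓝[>] (0:ℝ))
        (𝓝 (cexp (π*I*(r:ℂ)^2/(D:ℂ)) * 1)) := by
      intro r _
      refine Tendsto.const_mul _ ?_
      have h2 := (tendsto_theta2_one ((r:ℝ)/(D:ℝ)) 0).comp hT
      refine h2.congr (fun t => ?_)
      simp [Function.comp]
    have := tendsto_finset_sum (Finset.range D) htot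
    simpa using this
  have hr : Tendsto (fun t : ℝ => ((Real.sqrt D : ℂ) * cexp ((π:ℂ) * I / 4)) *
      jacobiTheta₂ 0 ((↑(-((D:ℝ))⁻¹) : ℂ) + I * ↑((((D:ℝ))^2*t)⁻¹))) (𝓝[>] (0:ℝ))
      (𝓝 (((Real.sqrt D : ℂ) * cexp ((π:ℂ) * I / 4)) * 1)) := by
    refine Tendsto.const_mul _ ?_
    have h2 := (tendsto_theta2_one 0 (-((D:ℝ))⁻¹)).comp hT
    refine h2.congr (fun t => ?_)
    simp [Function.comp]
  have heq : (fun t : ℝ => ∑ r ∈ Finset.range D, cexp (π*I*(r:ℂ)^2/(D:ℂ)) *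
      jacobiTheta₂ (↑((r:ℝ)/(D:ℝ))) (I * ↑((((D:ℝ))^2*t)⁻¹))) =ᶠ[𝓝[>] (0:ℝ)]
      (fun t : ℝ => ((Real.sqrt D : ℂ) * cexp ((π:ℂ) * I / 4)) *
      jacobiTheta₂ 0 ((↑(-((D:ℝ))⁻¹) : ℂ) + I * ↑((((D:ℝ))^2*t)⁻¹))) := by
    filter_upwards [self_mem_nhdsWithin] with t ht
    exact key_identity D hD hEven t ht
  have := tendsto_nhds_unique (hl.congr' heq) hr
  simpa using this

/-- Evaluation of the generalized quadratic Gauss sum for even `D`: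
`∑_{j=0}^{D−1} exp(πi(j² + 2kj)/D) = √D · e^{πi/4} · e^{−πik²/D}`. -/
theorem gauss_sum_even (D : ℕ) (hD : 0 < D) (hEven : Even D) (k : ℕ) :
    ∑ j ∈ Finset.range D,
        Complex.exp ((Real.pi : ℂ) * Complex.I * ((j : ℂ) ^ 2 + 2 * (k : ℂ) * (j : ℂ)) / (D : ℂ)) =
      (Real.sqrt D : ℂ) * Complex.exp ((Real.pi : ℂ) * Complex.I / 4) *
        Complex.exp (-((Real.pi : ℂ) * Complex.I * (k : ℂ) ^ 2 / (D : ℂ))) := by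
  have hDc : (D:ℂ) ≠ 0 := Nat.cast_ne_zero.mpr hD.ne'
  obtain ⟨h, hDh⟩ := hEven
  have gfun_period : ∀ m : ℕ, cexp (π*I*((m+D:ℕ):ℂ)^2/(D:ℂ)) = cexp (π*I*((m:ℕ):ℂ)^2/(D:ℂ)) := by
    intro m
    have e1 : π*I*((m+D:ℕ):ℂ)^2/(D:ℂ) = π*I*((m:ℕ):ℂ)^2/(D:ℂ) + (((m:ℤ) + (h:ℤ)):ℂ)*(2*π*I) := by
      push_cast
      field_simp
      subst hDh
      push_cast
      ring
    have h2 : cexp (((((m:ℤ)+(h:ℤ)):ℤ):ℂ)*(2*(π:ℂ)*I)) = 1 := Complex.exp_int_mul_two_pi_mul_I _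
    push_cast at h2
    rw [e1, Complex.exp_add]
    push_cast
    rw [h2, mul_one]
  have hshift : ∀ m : ℕ, ∑ j ∈ Finset.range D, cexp (π*I*((j+m:ℕ):ℂ)^2/(D:ℂ)) =
      ∑ j ∈ Finset.range D, cexp (π*I*((j:ℕ):ℂ)^2/(D:ℂ)) := by
    intro m
    induction m with
    | zero => simp
    | succ n ih =>
      set f : ℕ → ℂ := fun j => cexp (π*I*((j+n:ℕ):ℂ)^2/(D:ℂ)) with hfdef
      have h5 := Finset.sum_range_succ' f D
      have h6 := Finset.sum_range_succ f D
      have hf : f D = f 0 := by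
        simp only [hfdef]
        rw [show D + n = n + D from Nat.add_comm D n, gfun_period n]
        norm_num
      have step : ∑ j ∈ Finset.range D, cexp (π*I*((j+(n+1):ℕ):ℂ)^2/(D:ℂ)) =
          ∑ j ∈ Finset.range D, f j := by
        have e2 : ∀ j, cexp (π*I*((j+(n+1):ℕ):ℂ)^2/(D:ℂ)) = f (j+1) := by
          intro j
          have e3 : j + (n+1) = (j+1) + n := by omega
          rw [e3]
        rw [Finset.sum_congr rfl (fun j _ => e2 j)]
        linear_combination h6 - h5 + hf
      rw [step]
      exact ih
  calc ∑ j ∈ Finset.range D, cexp ((π:ℂ) * I * ((j:ℂ)^2 + 2*(k:ℂ)*(j:ℂ)) / (D:ℂ))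
      = ∑ j ∈ Finset.range D, cexp (-((π:ℂ)*I*(k:ℂ)^2/(D:ℂ))) * cexp (π*I*((j+k:ℕ):ℂ)^2/(D:ℂ)) := by
        apply Finset.sum_congr rfl
        intro j _
        rw [← Complex.exp_add]
        congr 1
        push_cast
        field_simp
        ring
    _ = cexp (-((π:ℂ)*I*(k:ℂ)^2/(D:ℂ))) * ∑ j ∈ Finset.range D, cexp (π*I*((j+k:ℕ):ℂ)^2/(D:ℂ)) := by
        rw [Finset.mul_sum]
    _ = cexp (-((π:ℂ)*I*(k:ℂ)^2/(D:ℂ))) * ∑ j ∈ Finset.range D, cexp (π*I*((j:ℕ):ℂ)^2/(D:ℂ)) := by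
        rw [hshift k]
    _ = cexp (-((π:ℂ)*I*(k:ℂ)^2/(D:ℂ))) * ((Real.sqrt D : ℂ) * cexp ((π:ℂ)*I/4)) := by
        rw [gauss_core D hD ⟨h, hDh⟩]
    _ = (Real.sqrt D : ℂ) * cexp ((π:ℂ)*I/4) * cexp (-((π:ℂ)*I*(k:ℂ)^2/(D:ℂ))) := by ring
end

section
/- For every positive integer D and every real number t with 0 < t ≤ 1, the determinant of the D×D matrix M(t) is nonzero. (Consequently every member of the graph-state family of equientangled bases has full Schmidt rank for all 0 < t ≤ 1.) -/
/-- The coefficient matrix `M(t)_{j,k} = exp(2πi·j·k·t/D)` of the graph-state family of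
equientangled bases has nonzero determinant for all `0 < t ≤ 1`; hence every basis state
has full Schmidt rank. -/
theorem graph_state_full_rank (D : ℕ) (hD : 0 < D) (t : ℝ) (ht0 : 0 < t) (ht1 : t ≤ 1) :
    (Matrix.of fun j k : Fin D =>
        Complex.exp (2 * (Real.pi : ℂ) * Complex.I * ((j : ℕ) : ℂ) * ((k : ℕ) : ℂ) * (t : ℂ) /
          (D : ℂ))).det ≠ 0 := by
  have hDC : (D : ℂ) ≠ 0 := Nat.cast_ne_zero.mpr hD.ne'
  have hmat : (Matrix.of fun j k : Fin D =>
      Complex.exp (2 * (Real.pi : ℂ) * Complex.I * ((j : ℕ) : ℂ) * ((k : ℕ) : ℂ) * (t : ℂ) /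
        (D : ℂ))) = Matrix.vandermonde (fun j : Fin D =>
      Complex.exp (2 * (Real.pi : ℂ) * Complex.I * ((j : ℕ) : ℂ) * (t : ℂ) / (D : ℂ))) := by
    ext j k
    simp only [Matrix.of_apply, Matrix.vandermonde_apply]
    rw [← Complex.exp_nat_mul]
    ring_nf
  rw [hmat, Matrix.det_vandermonde_ne_zero_iff]
  intro j k h
  rw [Complex.exp_eq_exp_iff_exists_int] at h
  obtain ⟨n, hn⟩ := h
  have h2 : (2 * (Real.pi : ℂ) * Complex.I) ≠ 0 := by
    simp [Real.pi_ne_zero, Complex.I_ne_zero]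
  have key : (2 * (Real.pi : ℂ) * Complex.I) * ((j : ℕ) * t) =
      (2 * (Real.pi : ℂ) * Complex.I) * ((k : ℕ) * t + n * D) := by
    field_simp at hn
    linear_combination (2 * (Real.pi : ℂ) * Complex.I) * hn
  have keyC : ((j : ℕ) : ℂ) * t = ((k : ℕ) : ℂ) * t + n * D := mul_left_cancel₀ h2 key
  have keyR : ((j : ℕ) : ℝ) * t = ((k : ℕ) : ℝ) * t + n * D := by exact_mod_cast keyC
  -- show n = 0
  have hjD : ((j : ℕ) : ℝ) < D := by exact_mod_cast j.isLt
  have hkD : ((k : ℕ) : ℝ) < D := by exact_mod_cast k.isLt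
  have hj0 : (0:ℝ) ≤ ((j : ℕ) : ℝ) := Nat.cast_nonneg _
  have hk0 : (0:ℝ) ≤ ((k : ℕ) : ℝ) := Nat.cast_nonneg _
  have hD0 : (0:ℝ) < D := by exact_mod_cast hD
  have habs : |(n : ℝ) * D| < D := by
    have : (n : ℝ) * D = ((j : ℕ) : ℝ) * t - ((k : ℕ) : ℝ) * t := by linarith
    rw [this, abs_sub_lt_iff]
    constructor
    · nlinarith
    · nlinarith
  have hn0 : n = 0 := by
    by_contra hne
    have : (1:ℝ) ≤ |(n:ℝ)| := by
      exact_mod_cast Int.one_le_abs (by exact_mod_cast hne)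
    rw [abs_mul, abs_of_pos hD0] at habs
    nlinarith
  rw [hn0] at keyR
  simp at keyR
  have : ((j : ℕ) : ℝ) = ((k : ℕ) : ℝ) := by
    rcases keyR with h | h
    · exact_mod_cast h
    · exact absurd h ht0.ne'
  exact Fin.ext (by exact_mod_cast this)
end

section
/- For every positive integer D and every real number t, |det M(t)|² = ∏_{r=1}^{D−1} (4·sin²(π·r·t/D))^{D−r}. (Equivalently, the G-concurrence of the graph-state equientangled basis states is C_G(t) = (2^{D−1}/D)·∏_{r=1}^{D−1}[sin²(πrt/D)]^{(D−r)/D}.) -/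
open Finset

lemma aux_abs_sq (a b : ℝ) :
    ‖Complex.exp (a * Complex.I) - Complex.exp (b * Complex.I)‖ ^ 2 =
      4 * Real.sin ((a - b) / 2) ^ 2 := by
  rw [Complex.sq_norm, Complex.normSq_apply]
  simp only [Complex.sub_re, Complex.sub_im, Complex.exp_ofReal_mul_I_re,
    Complex.exp_ofReal_mul_I_im]
  have h1 := Real.sin_sq_add_cos_sq ((a - b) / 2)
  have h2 := Real.cos_two_mul ((a - b) / 2)
  have h3 : 2 * ((a - b) / 2) = a - b := by ring
  rw [h3] at h2
  have h4 := Real.cos_sub a b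
  nlinarith [Real.sin_sq_add_cos_sq a, Real.sin_sq_add_cos_sq b]

lemma aux_count {M : Type*} [CommMonoid M] (g : ℕ → M) (D : ℕ) :
    ∏ j ∈ range D, ∏ i ∈ range j, g i = ∏ i ∈ range D, g i ^ (D - 1 - i) := by
  induction D with
  | zero => simp
  | succ D ih =>
      rw [prod_range_succ, ih, prod_range_succ]
      have : ∏ i ∈ range D, g i ^ (D - 1 - i) * g i ^ 1 =
          ∏ i ∈ range D, g i ^ (D + 1 - 1 - i) := by
        refine prod_congr rfl fun i hi => ?_
        rw [← pow_add]
        congr 1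
        have := mem_range.mp hi; omega
      simp only [pow_one] at this ⊢
      rw [← prod_mul_distrib, this]
      simp


/-- The squared absolute value of the Vandermonde-type determinant of
`M(t)_{j,k} = exp(2πi·j·k·t/D)` equals `∏_{r=1}^{D−1} (4·sin²(πrt/D))^{D−r}`;
equivalently, the G-concurrence of the graph-state equientangled basis states is
`C_G(t) = (2^{D−1}/D)·∏_{r=1}^{D−1}[sin²(πrt/D)]^{(D−r)/D}`. -/
theorem graph_state_det_abs_sq (D : ℕ) (hD : 0 < D) (t : ℝ) :
    ‖(Matrix.of fun j k : Fin D =>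
        Complex.exp (2 * (Real.pi : ℂ) * Complex.I * ((j : ℕ) : ℂ) * ((k : ℕ) : ℂ) * (t : ℂ) /
          (D : ℂ))).det‖ ^ 2 =
      ∏ r ∈ Finset.Ico 1 D, (4 * Real.sin (Real.pi * r * t / D) ^ 2) ^ (D - r) := by
  set F : ℕ → ℝ := fun r => 4 * Real.sin (Real.pi * r * t / D) ^ 2 with hF
  set v : Fin D → ℂ := fun j => Complex.exp (((2 * Real.pi * j * t / D : ℝ) : ℂ) * Complex.I)
    with hv
  have hM : (Matrix.of fun j k : Fin D =>
      Complex.exp (2 * (Real.pi : ℂ) * Complex.I * ((j : ℕ) : ℂ) * ((k : ℕ) : ℂ) * (t : ℂ) /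
        (D : ℂ))) = Matrix.vandermonde v := by
    ext j k
    rw [Matrix.vandermonde_apply, Matrix.of_apply, hv, ← Complex.exp_nat_mul]
    congr 1
    push_cast
    ring
  rw [hM, Matrix.det_vandermonde, norm_prod, ← prod_pow]
  have step1 : ∀ i : Fin D, ‖∏ j ∈ Ioi i, (v j - v i)‖ ^ 2 =
      ∏ j ∈ Ioi i, F ((j : ℕ) - (i : ℕ)) := by
    intro i
    rw [norm_prod, ← prod_pow]
    refine prod_congr rfl fun j hj => ?_
    have hij : (i : ℕ) < (j : ℕ) := Fin.lt_iff_val_lt_val.mp (mem_Ioi.mp hj)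
    rw [hv, aux_abs_sq, hF]
    congr 1
    rw [Nat.cast_sub hij.le]
    ring_nf
  rw [prod_congr rfl fun i _ => step1 i]
  rw [prod_comm' (t' := (univ : Finset (Fin D))) (s' := fun j => Iio j)
    (fun x y => by simp [mem_Ioi, mem_Iio, and_comm])]
  have inner : ∀ j : Fin D, ∏ i ∈ Iio j, F ((j : ℕ) - (i : ℕ)) =
      ∏ i ∈ range (j : ℕ), F (i + 1) := by
    intro j
    have h1 : ∏ i ∈ Iio j, F ((j : ℕ) - (i : ℕ)) = ∏ i ∈ range (j : ℕ), F ((j : ℕ) - i) := by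
      rw [← Nat.Iio_eq_range, ← Fin.map_valEmbedding_Iio, prod_map]
      rfl
    rw [h1, ← prod_range_reflect (fun i => F (i + 1)) (j : ℕ)]
    refine prod_congr rfl fun i hi => ?_
    have := mem_range.mp hi
    congr 1
    omega
  rw [prod_congr rfl fun j _ => inner j,
    Fin.prod_univ_eq_prod_range (fun n => ∏ i ∈ range n, F (i + 1)) D,
    aux_count, Finset.prod_Ico_eq_prod_range]
  obtain ⟨E, rfl⟩ : ∃ E, D = E + 1 := ⟨D - 1, by omega⟩
  rw [prod_range_succ]
  simp only [Nat.add_sub_cancel]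
  rw [Nat.sub_self, pow_zero, mul_one]
  refine prod_congr rfl fun i hi => ?_
  have := mem_range.mp hi
  simp only [hF]
  rw [Nat.add_comm i 1]
  congr 1
  omega
end

section
/- For every integer D ≥ 2, the function f(t) = ∏_{r=1}^{D−1} sin(π·r·t/D)^{2(D−r)} is strictly increasing on the open interval (0, 1). (Hence the G-concurrence C_G(t) = (2^{D−1}/D)·∏_{r=1}^{D−1}[sin²(πrt/D)]^{(D−r)/D} of the graph-state equientangled basis states is strictly increasing in t on (0, 1).) -/
lemma aux_sin (s co w : ℝ) (hs : s ≠ 0) (k : ℕ) (hk : 1 ≤ k) :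
    (↑(2 * k) : ℝ) * s ^ (2 * k - 1) * (co * w) = s ^ (2 * k) * (2 * (k : ℝ) * w * (co / s)) := by
  have he : 2 * k = (2 * k - 1) + 1 := by omega
  rw [he, pow_succ]
  push_cast
  field_simp
  rw [Nat.cast_sub (by omega : 1 ≤ 2 * k)]
  push_cast
  ring

lemma aux_cot (x y : ℝ) (hx : Real.sin x ≠ 0) (hy : Real.sin y ≠ 0) :
    Real.cos x / Real.sin x + Real.cos y / Real.sin y
      = Real.sin (x + y) / (Real.sin x * Real.sin y) := by
  rw [Real.sin_add]
  field_simp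
  ring

/-- The function `f(t) = ∏_{r=1}^{D−1} sin(πrt/D)^{2(D−r)}` is strictly increasing on
`(0, 1)`; hence the G-concurrence of the graph-state equientangled basis states is
strictly increasing in `t` on `(0, 1)`. -/
theorem sin_prod_strictMonoOn (D : ℕ) (hD : 2 ≤ D) :
    StrictMonoOn
      (fun t : ℝ => ∏ r ∈ Finset.Ico 1 D, Real.sin (Real.pi * r * t / D) ^ (2 * (D - r)))
      (Set.Ioo (0 : ℝ) 1) := by
  have hD0 : (0:ℝ) < D := by
    have : (0:ℕ) < D := by omega
    exact_mod_cast this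
  apply strictMonoOn_of_deriv_pos (convex_Ioo 0 1)
  · apply Continuous.continuousOn
    apply continuous_finset_prod
    intro r _
    exact (Real.continuous_sin.comp (by fun_prop)).pow _
  · intro t ht
    rw [interior_Ioo] at ht
    obtain ⟨ht0, ht1⟩ := ht
    have hsinpos : ∀ r : ℕ, 1 ≤ r → r < D → 0 < Real.sin (Real.pi * r * t / D) := by
      intro r h1 h2
      have hr0 : (0:ℝ) < r := by exact_mod_cast h1
      have hrD : (r:ℝ) < D := by exact_mod_cast h2
      apply Real.sin_pos_of_pos_of_lt_pi
      · positivity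
      · rw [div_lt_iff₀ hD0]
        nlinarith [Real.pi_pos, mul_pos hr0 (sub_pos.2 ht1)]
    set F : ℕ → ℝ → ℝ := fun r u => Real.sin (Real.pi * r * u / D) ^ (2 * (D - r)) with hF
    set d : ℕ → ℝ := fun r =>
      (↑(2 * (D - r)) : ℝ) * Real.sin (Real.pi * r * t / D) ^ (2 * (D - r) - 1) *
        (Real.cos (Real.pi * r * t / D) * (Real.pi * r / D)) with hd
    have hder : ∀ r ∈ Finset.Ico 1 D, HasDerivAt (F r) (d r) t := by
      intro r _
      have hlin : HasDerivAt (fun u : ℝ => Real.pi * r * u / D) (Real.pi * r / D) t := by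
        simpa using ((hasDerivAt_id t).const_mul (Real.pi * (r:ℝ))).div_const (D:ℝ)
      exact ((Real.hasDerivAt_sin _).comp t hlin).pow _
    have hprod := HasDerivAt.fun_finsetProd hder
    have hderiv : deriv (fun t : ℝ =>
        ∏ r ∈ Finset.Ico 1 D, Real.sin (Real.pi * r * t / D) ^ (2 * (D - r))) t
        = ∑ r ∈ Finset.Ico 1 D, (∏ j ∈ (Finset.Ico 1 D).erase r, F j t) • d r :=
      hprod.deriv
    rw [hderiv]
    set P : ℝ := ∏ r ∈ Finset.Ico 1 D, F r t with hP
    have hPpos : 0 < P := by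
      apply Finset.prod_pos
      intro r hr
      rw [Finset.mem_Ico] at hr
      exact pow_pos (hsinpos r hr.1 hr.2) _
    set c : ℕ → ℝ := fun r => 2 * ((D - r : ℕ) : ℝ) * (Real.pi * r / D) with hc
    set cot : ℕ → ℝ := fun r =>
      Real.cos (Real.pi * r * t / D) / Real.sin (Real.pi * r * t / D) with hcot
    have hterm : ∀ r ∈ Finset.Ico 1 D,
        (∏ j ∈ (Finset.Ico 1 D).erase r, F j t) • d r = P * (c r * cot r) := by
      intro r hr
      rw [Finset.mem_Ico] at hr
      have hsne : Real.sin (Real.pi * r * t / D) ≠ 0 := ne_of_gt (hsinpos r hr.1 hr.2)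
      have hdF : d r = F r t * (c r * cot r) := by
        simp only [hd, hF, hc, hcot]
        exact aux_sin _ _ _ hsne _ (by omega)
      rw [smul_eq_mul, hdF, hP, ← Finset.mul_prod_erase _ _ (Finset.mem_Ico.2 hr)]
      ring
    rw [Finset.sum_congr rfl hterm, ← Finset.mul_sum]
    apply mul_pos hPpos
    -- positivity of the cotangent sum via pairing r ↦ D - r
    have hmem : ∀ r ∈ Finset.Ico 1 D, D - r ∈ Finset.Ico 1 D := by
      intro r hr; rw [Finset.mem_Ico] at *; omega
    have hinv : ∀ r ∈ Finset.Ico 1 D, D - (D - r) = r := by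
      intro r hr; rw [Finset.mem_Ico] at hr; omega
    have hcsym : ∀ r ∈ Finset.Ico 1 D, c (D - r) = c r := by
      intro r hr
      simp only [hc]
      rw [hinv r hr]
      ring
    have hreindex : ∑ r ∈ Finset.Ico 1 D, c r * cot r
        = ∑ r ∈ Finset.Ico 1 D, c r * cot (D - r) := by
      refine Finset.sum_nbij' (fun r => D - r) (fun r => D - r) hmem hmem hinv hinv ?_
      intro r hr
      rw [hinv r hr, hcsym r hr]
    have hpair : ∀ r ∈ Finset.Ico 1 D, 0 < c r * (cot r + cot (D - r)) := by
      intro r hr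
      rw [Finset.mem_Ico] at hr
      have hsx := hsinpos r hr.1 hr.2
      have hmem' := hmem r (Finset.mem_Ico.2 hr)
      rw [Finset.mem_Ico] at hmem'
      have hsy := hsinpos (D - r) hmem'.1 hmem'.2
      have hxy : Real.pi * r * t / D + Real.pi * ((D - r : ℕ) : ℝ) * t / D = Real.pi * t := by
        have hcast : ((D - r : ℕ) : ℝ) = (D : ℝ) - r := by
          push_cast [Nat.cast_sub (le_of_lt hr.2)]; ring
        rw [hcast]
        field_simp
        ring
      have hcotsum : cot r + cot (D - r)
          = Real.sin (Real.pi * t) /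
            (Real.sin (Real.pi * r * t / D) * Real.sin (Real.pi * ((D - r : ℕ) : ℝ) * t / D)) := by
        simp only [hcot]
        rw [aux_cot _ _ (ne_of_gt hsx) (ne_of_gt hsy), hxy]
      have hsint : 0 < Real.sin (Real.pi * t) := by
        apply Real.sin_pos_of_pos_of_lt_pi
        · positivity
        · nlinarith [Real.pi_pos]
      have hcpos : 0 < c r := by
        simp only [hc]
        have h1 : (0:ℝ) < ((D - r : ℕ) : ℝ) := by exact_mod_cast (by omega : 0 < D - r)
        have h2 : (0:ℝ) < (r:ℝ) := by exact_mod_cast hr.1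
        positivity
      rw [hcotsum]
      positivity
    have hne : (Finset.Ico 1 D).Nonempty := ⟨1, Finset.mem_Ico.2 ⟨le_refl 1, by omega⟩⟩
    have h2 : 0 < ∑ r ∈ Finset.Ico 1 D, c r * (cot r + cot (D - r)) :=
      Finset.sum_pos hpair hne
    have hsplit : ∑ r ∈ Finset.Ico 1 D, c r * (cot r + cot (D - r))
        = (∑ r ∈ Finset.Ico 1 D, c r * cot r) + ∑ r ∈ Finset.Ico 1 D, c r * cot (D - r) := by
      rw [← Finset.sum_add_distrib]
      exact Finset.sum_congr rfl fun r _ => by ring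
    rw [hsplit, ← hreindex] at h2
    linarith
end
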